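/- arXiv:1108.4496 — 6 statements merged into one kernel-verified Lean document; each statement's English description precedes it below -/
import Mathlib

section
/- For all integers n ≥ 2 and ℓ ≥ 1, with λ = ℓ/(n−1), the count M(n,ℓ) admits the integral representation M(n,ℓ) = (2π)^{−n} · (λ^{−λ}(1+λ)^{1+λ})^{n(n−1)/2} · ∫_{[−π,π]^n} F(θ) dθ, where F(θ) = exp(−iℓ·Σ_{j=1}^n θ_j) · ∏_{1≤j<k≤n} (1 − λ(e^{i(θ_j+θ_k)} − 1))^{−1}. (Each factor 1 − λ(e^{i(θ_j+θ_k)} − 1) has real part at least 1, hence is nonzero.) -/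
open MeasureTheory

/-- `M n ℓ` is the number of `n × n` symmetric matrices with nonnegative integer
entries, zero diagonal, and every row sum equal to `ℓ`. -/
noncomputable def M (n ℓ : ℕ) : ℕ :=
  Nat.card {A : Matrix (Fin n) (Fin n) ℕ //
    A.IsSymm ∧ (∀ i, A i i = 0) ∧ ∀ i, ∑ j, A i j = ℓ}

abbrev Pairs (n : ℕ) := {p : Fin n × Fin n // p.1 < p.2}

def dd {n : ℕ} (p : Pairs n) (j : Fin n) : ℕ :=
  (if p.val.1 = j then 1 else 0) + (if p.val.2 = j then 1 else 0)

def SS {n : ℕ} (m : Pairs n → ℕ) (j : Fin n) : ℕ := ∑ p : Pairs n, m p * dd p j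

noncomputable def wfun (n : ℕ) (q : ℝ) (θ : Fin n → ℝ) (p : Pairs n) : ℂ :=
  (q : ℂ) * Complex.exp (Complex.I * ((θ p.val.1 : ℂ) + (θ p.val.2 : ℂ)))

noncomputable def Ffun (n ℓ : ℕ) (q : ℝ) (m : Pairs n → ℕ) (θ : Fin n → ℝ) : ℂ :=
  Complex.exp (-Complex.I * (ℓ : ℂ) * ∑ j, (θ j : ℂ)) * ∏ p : Pairs n, (wfun n q θ p) ^ (m p)

theorem wfun_norm (n : ℕ) (q : ℝ) (hq : 0 ≤ q) (θ : Fin n → ℝ) (p : Pairs n) :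
    ‖wfun n q θ p‖ = q := by
  unfold wfun
  rw [norm_mul, Complex.norm_real, Real.norm_of_nonneg hq]
  rw [show Complex.I * ((θ p.val.1 : ℂ) + (θ p.val.2 : ℂ)) =
    ((θ p.val.1 + θ p.val.2 : ℝ) : ℂ) * Complex.I by push_cast; ring]
  rw [Complex.norm_exp_ofReal_mul_I, mul_one]

theorem Ffun_norm (n ℓ : ℕ) (q : ℝ) (hq : 0 ≤ q) (m : Pairs n → ℕ) (θ : Fin n → ℝ) :
    ‖Ffun n ℓ q m θ‖ = ∏ p : Pairs n, q ^ (m p) := by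
  unfold Ffun
  rw [norm_mul]
  rw [show -Complex.I * (ℓ : ℂ) * ∑ j, (θ j : ℂ) =
    ((-(ℓ * ∑ j, θ j) : ℝ) : ℂ) * Complex.I by push_cast; ring]
  rw [Complex.norm_exp_ofReal_mul_I, one_mul, norm_prod]
  exact Finset.prod_congr rfl fun p _ => by rw [norm_pow, wfun_norm n q hq θ p]

theorem Ffun_continuous (n ℓ : ℕ) (q : ℝ) (m : Pairs n → ℕ) : Continuous (Ffun n ℓ q m) := by
  unfold Ffun wfun
  apply Continuous.mul
  · exact Complex.continuous_exp.comp (continuous_const.mul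
      (continuous_finset_sum _ fun j _ => Complex.continuous_ofReal.comp (continuous_apply j)))
  · refine continuous_finset_prod _ fun p _ => Continuous.pow ?_ _
    exact continuous_const.mul (Complex.continuous_exp.comp (continuous_const.mul
      ((Complex.continuous_ofReal.comp (continuous_apply _)).add
        (Complex.continuous_ofReal.comp (continuous_apply _)))))

theorem theta_sum_dd {n : ℕ} (θ : Fin n → ℝ) (p : Pairs n) :
    ((θ p.val.1 : ℂ) + (θ p.val.2 : ℂ)) = ∑ j, (dd p j : ℂ) * (θ j : ℂ) := by
  unfold dd
  have : ∀ j, ((((if p.val.1 = j then 1 else 0) + (if p.val.2 = j then 1 else 0) : ℕ)) : ℂ) *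
      (θ j : ℂ) = (if p.val.1 = j then (θ j : ℂ) else 0) +
        (if p.val.2 = j then (θ j : ℂ) else 0) := by
    intro j
    by_cases h1 : p.val.1 = j <;> by_cases h2 : p.val.2 = j <;> simp [h1, h2] <;> ring
  rw [Finset.sum_congr rfl fun j _ => this j, Finset.sum_add_distrib,
    Finset.sum_ite_eq Finset.univ p.val.1 (fun j => (θ j : ℂ)),
    Finset.sum_ite_eq Finset.univ p.val.2 (fun j => (θ j : ℂ))]
  simp

theorem sum_swap_SS {n : ℕ} (m : Pairs n → ℕ) (θ : Fin n → ℝ) :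
    ∑ p : Pairs n, (m p : ℂ) * ((θ p.val.1 : ℂ) + (θ p.val.2 : ℂ)) =
      ∑ j, (SS m j : ℂ) * (θ j : ℂ) := by
  have hSS : ∀ j, ((SS m j : ℕ) : ℂ) = ∑ p : Pairs n, (m p : ℂ) * (dd p j : ℂ) := by
    intro j; unfold SS; push_cast; rfl
  calc ∑ p : Pairs n, (m p : ℂ) * ((θ p.val.1 : ℂ) + (θ p.val.2 : ℂ))
      = ∑ p : Pairs n, ∑ j, (m p : ℂ) * ((dd p j : ℂ) * (θ j : ℂ)) := by
        refine Finset.sum_congr rfl fun p _ => ?_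
        rw [theta_sum_dd θ p, Finset.mul_sum]
    _ = ∑ j, ∑ p : Pairs n, (m p : ℂ) * ((dd p j : ℂ) * (θ j : ℂ)) := Finset.sum_comm
    _ = ∑ j, (SS m j : ℂ) * (θ j : ℂ) := by
        refine Finset.sum_congr rfl fun j _ => ?_
        rw [hSS j, Finset.sum_mul]
        exact Finset.sum_congr rfl fun p _ => by ring

theorem Ffun_key (n ℓ : ℕ) (q : ℝ) (m : Pairs n → ℕ) (θ : Fin n → ℝ) :
    Ffun n ℓ q m θ = (∏ p : Pairs n, ((q : ℂ)) ^ (m p)) *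
      ∏ j, Complex.exp (Complex.I * (((SS m j : ℤ) - (ℓ : ℤ) : ℤ) : ℂ) * (θ j : ℂ)) := by
  unfold Ffun wfun
  rw [Finset.prod_congr rfl fun p (_ : p ∈ Finset.univ) => mul_pow ((q:ℂ)) _ (m p),
    Finset.prod_mul_distrib]
  have h1 : ∀ p : Pairs n, Complex.exp (Complex.I * ((θ p.val.1 : ℂ) + (θ p.val.2 : ℂ))) ^ (m p)
      = Complex.exp ((m p : ℂ) * (Complex.I * ((θ p.val.1 : ℂ) + (θ p.val.2 : ℂ)))) := by
    intro p
    rw [Complex.exp_nat_mul]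
  rw [Finset.prod_congr rfl fun p _ => h1 p, ← Complex.exp_sum]
  have h2 : ∑ p : Pairs n, (m p : ℂ) * (Complex.I * ((θ p.val.1 : ℂ) + (θ p.val.2 : ℂ)))
      = Complex.I * ∑ p : Pairs n, (m p : ℂ) * ((θ p.val.1 : ℂ) + (θ p.val.2 : ℂ)) := by
    rw [Finset.mul_sum]; exact Finset.sum_congr rfl fun p _ => by ring
  rw [h2, sum_swap_SS, ← Complex.exp_sum, ← mul_assoc, mul_comm
    (Complex.exp (-Complex.I * (ℓ : ℂ) * ∑ j, (θ j : ℂ))) _, mul_assoc, ← Complex.exp_add]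
  congr 1
  rw [show -Complex.I * (ℓ : ℂ) * ∑ j, (θ j : ℂ) = ∑ j, -Complex.I * (ℓ : ℂ) * (θ j : ℂ) from
      Finset.mul_sum Finset.univ (fun j => (θ j : ℂ)) (-Complex.I * (ℓ : ℂ))]
  rw [show Complex.I * ∑ j, (SS m j : ℂ) * (θ j : ℂ) =
        ∑ j, Complex.I * ((SS m j : ℂ) * (θ j : ℂ)) from
      Finset.mul_sum Finset.univ (fun j => (SS m j : ℂ) * (θ j : ℂ)) Complex.I]
  rw [← Finset.sum_add_distrib]
  refine congrArg Complex.exp (Finset.sum_congr rfl fun j _ => ?_)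
  push_cast
  ring


theorem oneDim (c : ℤ) :
    ∫ x in Set.Icc (-Real.pi) Real.pi, Complex.exp (Complex.I * c * x) =
      if c = 0 then (2 * Real.pi : ℝ) else 0 := by
  rw [MeasureTheory.integral_Icc_eq_integral_Ioc,
    ← intervalIntegral.integral_of_le (by linarith [Real.pi_pos] : -Real.pi ≤ Real.pi)]
  by_cases hc : c = 0
  · simp [hc]
    norm_num
    ring
  · rw [if_neg hc]
    have hne : (Complex.I * c : ℂ) ≠ 0 := by
      simp [Complex.I_ne_zero, hc]
    rw [integral_exp_mul_complex hne]
    have key : Complex.exp (Complex.I * c * (Real.pi : ℂ)) =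
        Complex.exp (Complex.I * c * ((-Real.pi : ℝ) : ℂ)) := by
      rw [show (Complex.I * c * (Real.pi : ℂ)) =
        Complex.I * c * ((-Real.pi : ℝ) : ℂ) + c * (2 * Real.pi * Complex.I) by
          push_cast; ring]
      rw [Complex.exp_add, Complex.exp_int_mul_two_pi_mul_I, mul_one]
    rw [key]
    simp


theorem boxIntegral {n : ℕ} (c : Fin n → ℤ) :
    ∫ θ : Fin n → ℝ in Set.univ.pi (fun _ : Fin n => Set.Icc (-Real.pi) Real.pi),
        ∏ j, Complex.exp (Complex.I * c j * θ j) =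
      ∏ j, ∫ x in Set.Icc (-Real.pi) Real.pi, Complex.exp (Complex.I * c j * x) := by
  have hms : MeasurableSet (Set.univ.pi (fun _ : Fin n => Set.Icc (-Real.pi) Real.pi)) :=
    MeasurableSet.univ_pi fun _ => measurableSet_Icc
  rw [← integral_indicator hms]
  have : (Set.univ.pi (fun _ : Fin n => Set.Icc (-Real.pi) Real.pi)).indicator
      (fun θ : Fin n → ℝ => ∏ j, Complex.exp (Complex.I * c j * θ j)) =
      fun θ : Fin n → ℝ => ∏ j, (Set.Icc (-Real.pi) Real.pi).indicator
        (fun x : ℝ => Complex.exp (Complex.I * c j * x)) (θ j) := by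
    funext θ
    by_cases hθ : θ ∈ Set.univ.pi (fun _ : Fin n => Set.Icc (-Real.pi) Real.pi)
    · rw [Set.indicator_of_mem hθ]
      refine Finset.prod_congr rfl fun j _ => ?_
      rw [Set.indicator_of_mem (hθ j (Set.mem_univ j))]
    · rw [Set.indicator_of_notMem hθ]
      rw [Set.mem_univ_pi] at hθ
      push_neg at hθ
      obtain ⟨j, hj⟩ := hθ
      exact (Finset.prod_eq_zero (Finset.mem_univ j)
        (by rw [Set.indicator_of_notMem hj])).symm
  rw [this, MeasureTheory.volume_pi, MeasureTheory.integral_fintype_prod_eq_prod (ι := Fin n)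
    (f := fun j (x : ℝ) => (Set.Icc (-Real.pi) Real.pi).indicator
      (fun x : ℝ => Complex.exp (Complex.I * c j * x)) x)]
  exact Finset.prod_congr rfl fun j _ => integral_indicator measurableSet_Icc

theorem Ffun_integral (n ℓ : ℕ) (q : ℝ) (m : Pairs n → ℕ) :
    (∫ θ : Fin n → ℝ in Set.univ.pi (fun _ : Fin n => Set.Icc (-Real.pi) Real.pi),
        Ffun n ℓ q m θ) =
      if (∀ j, SS m j = ℓ) then ((2 * Real.pi : ℝ) : ℂ) ^ n * ∏ p : Pairs n, ((q : ℂ)) ^ (m p)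
      else 0 := by
  have : ∀ θ : Fin n → ℝ, Ffun n ℓ q m θ = (∏ p : Pairs n, ((q : ℂ)) ^ (m p)) *
      ∏ j, Complex.exp (Complex.I * (((SS m j : ℤ) - (ℓ : ℤ) : ℤ) : ℂ) * (θ j : ℂ)) :=
    Ffun_key n ℓ q m
  rw [show (fun θ : Fin n → ℝ => Ffun n ℓ q m θ) = fun θ : Fin n → ℝ =>
      (∏ p : Pairs n, ((q : ℂ)) ^ (m p)) *
      ∏ j, Complex.exp (Complex.I * (((SS m j : ℤ) - (ℓ : ℤ) : ℤ) : ℂ) * (θ j : ℂ)) from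
    funext this]
  rw [MeasureTheory.integral_const_mul, boxIntegral (fun j => (SS m j : ℤ) - (ℓ : ℤ))]
  rw [Finset.prod_congr rfl fun j (_ : j ∈ Finset.univ) => oneDim ((SS m j : ℤ) - (ℓ : ℤ))]
  by_cases hall : ∀ j, SS m j = ℓ
  · rw [if_pos hall]
    have hfac : ∀ j : Fin n,
        ((if (SS m j : ℤ) - (ℓ : ℤ) = 0 then (2 * Real.pi : ℝ) else 0 : ℝ) : ℂ) =
          ((2 * Real.pi : ℝ) : ℂ) := by
      intro j
      rw [if_pos (by rw [hall j]; ring : (SS m j : ℤ) - (ℓ : ℤ) = 0)]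
    rw [Finset.prod_congr rfl fun j (_ : j ∈ Finset.univ) => hfac j,
      Finset.prod_const, Finset.card_univ, Fintype.card_fin]
    ring
  · rw [if_neg hall]
    push_neg at hall
    obtain ⟨j0, hj0⟩ := hall
    have hfac : ((if (SS m j0 : ℤ) - (ℓ : ℤ) = 0 then (2 * Real.pi : ℝ) else 0 : ℝ) : ℂ) = 0 := by
      rw [if_neg (by simp only [sub_eq_zero]; exact_mod_cast hj0)]
      exact Complex.ofReal_zero
    rw [Finset.prod_eq_zero (Finset.mem_univ j0) hfac]
    ring


/-- Finite product of absolutely convergent series, as a sum over multi-indices. -/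
theorem prod_tsum_pi {ι : Type*} [Fintype ι] (g : ι → ℕ → ℂ)
    (hg : ∀ i, Summable fun k => ‖g i k‖) :
    Summable (fun m : ι → ℕ => ‖∏ i, g i (m i)‖) ∧
      (∑' m : ι → ℕ, ∏ i, g i (m i)) = ∏ i, ∑' k, g i k := by
  -- first prove for `Fin c`
  suffices H : ∀ (c : ℕ) (g : Fin c → ℕ → ℂ), (∀ i, Summable fun k => ‖g i k‖) →
      Summable (fun m : Fin c → ℕ => ‖∏ i, g i (m i)‖) ∧
      (∑' m : Fin c → ℕ, ∏ i, g i (m i)) = ∏ i, ∑' k, g i k by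
    obtain ⟨e⟩ : Nonempty (ι ≃ Fin (Fintype.card ι)) := ⟨Fintype.equivFin ι⟩
    have key := H (Fintype.card ι) (fun j => g (e.symm j)) (fun j => hg _)
    set E : (Fin (Fintype.card ι) → ℕ) ≃ (ι → ℕ) := Equiv.arrowCongr e.symm (Equiv.refl ℕ)
    have hE : ∀ (μ : Fin (Fintype.card ι) → ℕ), ∏ i, g i (E μ i) = ∏ j, g (e.symm j) (μ j) := by
      intro μ
      rw [← Equiv.prod_comp e.symm (fun i => g i (E μ i))]
      refine Finset.prod_congr rfl fun j _ => ?_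
      simp [E, Equiv.arrowCongr]
    constructor
    · rw [← E.summable_iff]
      refine key.1.congr fun μ => ?_
      simp only [Function.comp]
      exact congrArg norm (hE μ).symm
    · rw [← E.tsum_eq]
      have : (∑' μ, ∏ i, g i (E μ i)) = ∑' μ : Fin (Fintype.card ι) → ℕ, ∏ j, g (e.symm j) (μ j) := by
        exact tsum_congr fun μ => by rw [hE μ]
      rw [this, key.2, ← Equiv.prod_comp e.symm (fun i => ∑' k, g i k)]
  intro c
  induction c with
  | zero =>
    intro g hg
    constructor
    · exact (hasSum_single (default : Fin 0 → ℕ)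
        (fun b hb => absurd (Subsingleton.elim b default) hb)).summable
    · rw [tsum_eq_single (default : Fin 0 → ℕ)
        (fun b hb => absurd (Subsingleton.elim b default) hb)]
      simp
  | succ c ih =>
    intro g hg
    have ihs := ih (fun j => g j.succ) (fun j => hg _)
    set f : ℕ → ℂ := g 0 with hf
    set h : (Fin c → ℕ) → ℂ := fun μ => ∏ j, g j.succ (μ j) with hh
    have hsum2 : Summable fun x : ℕ × (Fin c → ℕ) => ‖f x.1 * h x.2‖ := by
      refine Summable.congr (Summable.mul_of_nonneg (hg 0) ihs.1
        (fun _ => norm_nonneg _) (fun _ => norm_nonneg _)) fun x => ?_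
      exact (norm_mul _ _).symm
    set E : ℕ × (Fin c → ℕ) ≃ (Fin (c+1) → ℕ) := Fin.consEquiv (fun _ => ℕ)
    have hprod : ∀ x : ℕ × (Fin c → ℕ), ∏ i, g i (E x i) = f x.1 * h x.2 := by
      intro x
      rw [Fin.prod_univ_succ]
      simp [E, Fin.consEquiv, hf, hh]
    constructor
    · rw [← E.summable_iff]
      refine hsum2.congr fun x => ?_
      rw [Function.comp, hprod]
    · rw [← E.tsum_eq, tsum_congr (fun x => hprod x),
        ← tsum_mul_tsum_of_summable_norm (hg 0) ihs.1, ihs.2, Fin.prod_univ_succ]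

def Φ {n : ℕ} (m : Pairs n → ℕ) : Matrix (Fin n) (Fin n) ℕ := fun i j =>
  if h : i < j then m ⟨(i, j), h⟩ else if h : j < i then m ⟨(j, i), h⟩ else 0

theorem Φ_apply_lt {n : ℕ} (m : Pairs n → ℕ) (p : Pairs n) : Φ m p.val.1 p.val.2 = m p := by
  unfold Φ
  rw [dif_pos p.prop]

theorem sum_subtype_pairs {n : ℕ} (f : Fin n × Fin n → ℕ) :
    ∑ p : Pairs n, f p.val =
      ∑ a : Fin n, ∑ b : Fin n, if a < b then f (a, b) else 0 := by
  rw [← Finset.sum_subtype (Finset.univ.filter (fun p : Fin n × Fin n => p.1 < p.2))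
      (fun p => by simp) f, Finset.sum_filter, Fintype.sum_prod_type]

theorem rowSum_eq {n : ℕ} (m : Pairs n → ℕ) (i : Fin n) :
    ∑ j, Φ m i j = SS m i := by
  have hsplit : ∀ j, Φ m i j = (if i < j then Φ m i j else 0) +
      (if j < i then Φ m j i else 0) := by
    intro j
    rcases lt_trichotomy i j with h | h | h
    · simp [h, not_lt_of_gt h]
    · simp [h, lt_irrefl, Φ]
    · have : Φ m i j = Φ m j i := by unfold Φ; rw [dif_neg (not_lt_of_gt h), dif_pos h, dif_pos h]
      simp [h, not_lt_of_gt h, this]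
  have hS : SS m i = (∑ p : Pairs n, if p.val.1 = i then m p else 0) +
      (∑ p : Pairs n, if p.val.2 = i then m p else 0) := by
    unfold SS dd
    rw [← Finset.sum_add_distrib]
    refine Finset.sum_congr rfl fun p _ => ?_
    by_cases h1 : p.val.1 = i <;> by_cases h2 : p.val.2 = i <;> simp [h1, h2, mul_two]
  have claimA : (∑ p : Pairs n, if p.val.1 = i then m p else 0) =
      ∑ b, if i < b then Φ m i b else 0 := by
    have : ∀ p : Pairs n, (if p.val.1 = i then m p else 0) =
        (fun q : Fin n × Fin n => if q.1 = i then Φ m q.1 q.2 else 0) p.val := by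
      intro p; simp only []
      by_cases h : p.val.1 = i
      · rw [if_pos h, if_pos h, Φ_apply_lt]
      · rw [if_neg h, if_neg h]
    rw [Finset.sum_congr rfl (fun p _ => this p), sum_subtype_pairs (fun q : Fin n × Fin n => if q.1 = i then Φ m q.1 q.2 else 0)]
    have swap : ∀ a b : Fin n, (if a < b then (if a = i then Φ m a b else 0) else 0) =
        (if a = i then (if a < b then Φ m a b else 0) else 0) := by
      intro a b
      by_cases h1 : a < b <;> by_cases h2 : a = i <;> simp [h1, h2]
    simp_rw [swap]
    rw [Finset.sum_comm]
    simp_rw [Finset.sum_ite_eq' Finset.univ i]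
    simp
  have claimB : (∑ p : Pairs n, if p.val.2 = i then m p else 0) =
      ∑ a, if a < i then Φ m a i else 0 := by
    have : ∀ p : Pairs n, (if p.val.2 = i then m p else 0) =
        (fun q : Fin n × Fin n => if q.2 = i then Φ m q.1 q.2 else 0) p.val := by
      intro p; simp only []
      by_cases h : p.val.2 = i
      · rw [if_pos h, if_pos h, Φ_apply_lt]
      · rw [if_neg h, if_neg h]
    rw [Finset.sum_congr rfl (fun p _ => this p), sum_subtype_pairs (fun q : Fin n × Fin n => if q.2 = i then Φ m q.1 q.2 else 0)]
    have swap : ∀ a b : Fin n, (if a < b then (if b = i then Φ m a b else 0) else 0) =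
        (if b = i then (if a < b then Φ m a b else 0) else 0) := by
      intro a b
      by_cases h1 : a < b <;> by_cases h2 : b = i <;> simp [h1, h2]
    simp_rw [swap, Finset.sum_ite_eq' Finset.univ i]
    simp
  calc ∑ j, Φ m i j = ∑ j, ((if i < j then Φ m i j else 0) + (if j < i then Φ m j i else 0)) :=
        Finset.sum_congr rfl fun j _ => hsplit j
    _ = (∑ b, if i < b then Φ m i b else 0) + (∑ a, if a < i then Φ m a i else 0) :=
        Finset.sum_add_distrib
    _ = SS m i := by rw [hS, claimA, claimB]

theorem Φ_symm {n : ℕ} (m : Pairs n → ℕ) : (Φ m).IsSymm := by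
  unfold Matrix.IsSymm
  funext i j
  unfold Φ Matrix.transpose
  rcases lt_trichotomy i j with h | h | h
  · simp [Matrix.of_apply, h, not_lt_of_gt h]
  · simp [Matrix.of_apply, h, lt_irrefl]
  · simp [Matrix.of_apply, h, not_lt_of_gt h]

theorem Φ_diag {n : ℕ} (m : Pairs n → ℕ) (i : Fin n) : Φ m i i = 0 := by
  unfold Φ; simp

theorem Φ_inv {n : ℕ} (A : Matrix (Fin n) (Fin n) ℕ) (hs : A.IsSymm) (hd : ∀ i, A i i = 0) :
    Φ (fun p : Pairs n => A p.val.1 p.val.2) = A := by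
  funext i j
  unfold Φ
  rcases lt_trichotomy i j with h | h | h
  · rw [dif_pos h]
  · subst h; simp [hd i]
  · rw [dif_neg (not_lt_of_gt h), dif_pos h]
    exact hs.apply i j

def matEquiv (n ℓ : ℕ) :
    {m : Pairs n → ℕ // ∀ j, SS m j = ℓ} ≃
      {A : Matrix (Fin n) (Fin n) ℕ // A.IsSymm ∧ (∀ i, A i i = 0) ∧ ∀ i, ∑ j, A i j = ℓ} where
  toFun m := ⟨Φ m.val, Φ_symm m.val, Φ_diag m.val,
    fun i => (rowSum_eq m.val i).trans (m.prop i)⟩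
  invFun A := ⟨fun p => A.val p.val.1 p.val.2, by
    intro j
    have h := rowSum_eq (fun p : Pairs n => A.val p.val.1 p.val.2) j
    rw [Φ_inv A.val A.prop.1 A.prop.2.1] at h
    rw [← h]
    exact A.prop.2.2 j⟩
  left_inv m := by
    apply Subtype.ext
    funext p
    show Φ m.val p.val.1 p.val.2 = m.val p
    unfold Φ
    rw [dif_pos p.prop]
  right_inv A := Subtype.ext (Φ_inv A.val A.prop.1 A.prop.2.1)

def pairsEquiv (n : ℕ) : Pairs n ≃ (Σ j : Fin n, Fin j.val) where
  toFun p := ⟨p.val.2, ⟨p.val.1.val, p.prop⟩⟩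
  invFun x := ⟨(⟨x.2.val, lt_trans x.2.isLt x.1.isLt⟩, x.1), x.2.isLt⟩
  left_inv p := rfl
  right_inv x := rfl

theorem card_pairs (n : ℕ) : Fintype.card (Pairs n) = n * (n - 1) / 2 := by
  rw [Fintype.card_congr (pairsEquiv n), Fintype.card_sigma]
  simp only [Fintype.card_fin]
  rw [Fin.sum_univ_eq_sum_range (fun i => i) n, Finset.sum_range_id]

theorem sum_dd {n : ℕ} (p : Pairs n) : ∑ j, dd p j = 2 := by
  unfold dd
  rw [Finset.sum_add_distrib, Finset.sum_ite_eq Finset.univ, Finset.sum_ite_eq Finset.univ]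
  simp

theorem two_sum_eq {n ℓ : ℕ} (m : Pairs n → ℕ) (hm : ∀ j, SS m j = ℓ) :
    2 * (∑ p : Pairs n, m p) = n * ℓ := by
  have h1 : ∑ j : Fin n, SS m j = n * ℓ := by
    simp [hm, Finset.sum_const, Finset.card_univ]
  have h2 : ∑ j : Fin n, SS m j = ∑ p : Pairs n, m p * 2 := by
    unfold SS
    rw [Finset.sum_comm]
    exact Finset.sum_congr rfl fun p _ => by rw [← Finset.mul_sum, sum_dd]
  have h3 : ∑ p : Pairs n, m p * 2 = 2 * ∑ p : Pairs n, m p := by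
    rw [← Finset.sum_mul, mul_comm]
  omega

theorem T_finite (n ℓ : ℕ) : Set.Finite {m : Pairs n → ℕ | ∀ j, SS m j = ℓ} := by
  refine Set.Finite.subset (Set.finite_Icc (0 : Pairs n → ℕ) (fun _ => ℓ)) ?_
  intro m hm
  refine Set.mem_Icc.mpr ⟨fun p => Nat.zero_le _, fun p => ?_⟩
  have h1 : m p * dd p p.val.1 ≤ SS m p.val.1 := by
    unfold SS
    exact Finset.single_le_sum (f := fun q : Pairs n => m q * dd q p.val.1)
      (fun q _ => Nat.zero_le _) (Finset.mem_univ p)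
  have h2 : dd p p.val.1 = 1 := by
    unfold dd
    rw [if_pos rfl, if_neg (Ne.symm (ne_of_lt p.prop))]
  rw [h2, mul_one, hm p.val.1] at h1
  exact h1

-- scalar identity
theorem scalar_id (n ℓ K E : ℕ) (hn : 2 ≤ n) (hℓ : 1 ≤ ℓ) (lam : ℝ)
    (hlam : lam = (ℓ : ℝ) / ((n : ℝ) - 1)) (hK : 2 * K = n * (n - 1)) (hE : 2 * E = n * ℓ) :
    (lam ^ (-lam) * (1 + lam) ^ (1 + lam)) ^ K * ((1 + lam)⁻¹) ^ K *
      (lam / (1 + lam)) ^ E = 1 := by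
  have hn1 : (1:ℝ) < (n:ℝ) := by exact_mod_cast lt_of_lt_of_le (by norm_num) hn
  have hx : 0 < lam := by
    rw [hlam]
    apply div_pos
    · exact_mod_cast Nat.lt_of_lt_of_le Nat.zero_lt_one hℓ
    · linarith
  have hy : (0:ℝ) < 1 + lam := by linarith
  have hKx : lam * K = E := by
    have c1 : 2 * (K:ℝ) = (n:ℝ) * ((n:ℝ) - 1) := by
      have : ((2 * K : ℕ) : ℝ) = ((n * (n-1) : ℕ) : ℝ) := by rw [hK]
      push_cast [Nat.cast_sub (by omega : 1 ≤ n)] at this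
      linarith
    have c2 : 2 * (E:ℝ) = (n:ℝ) * (ℓ:ℝ) := by
      have : ((2 * E : ℕ) : ℝ) = ((n * ℓ : ℕ) : ℝ) := by rw [hE]
      push_cast at this
      linarith
    rw [hlam]
    have hne : (n:ℝ) - 1 ≠ 0 := by linarith
    field_simp
    nlinarith [c1, c2]
  rw [Real.rpow_def_of_pos hx, Real.rpow_def_of_pos hy,
    show (1 + lam)⁻¹ = Real.exp (-(Real.log (1 + lam))) by
      rw [Real.exp_neg, Real.exp_log hy],
    show lam / (1 + lam) = Real.exp (Real.log lam - Real.log (1 + lam)) by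
      rw [Real.exp_sub, Real.exp_log hx, Real.exp_log hy],
    ← Real.exp_add, ← Real.exp_nat_mul, ← Real.exp_nat_mul, ← Real.exp_nat_mul,
    ← Real.exp_add, ← Real.exp_add]
  have expand : (K:ℝ) * (Real.log lam * -lam + Real.log (1 + lam) * (1 + lam)) +
      (K:ℝ) * -Real.log (1 + lam) + (E:ℝ) * (Real.log lam - Real.log (1 + lam)) =
      ((E:ℝ) - lam * K) * (Real.log lam - Real.log (1 + lam)) := by ring
  rw [expand, hKx, sub_self, zero_mul, Real.exp_zero]

theorem stmt_3 (n ℓ : ℕ) (hn : 2 ≤ n) (hℓ : 1 ≤ ℓ)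
    (lam : ℝ) (hlam : lam = (ℓ : ℝ) / ((n : ℝ) - 1)) :
    (M n ℓ : ℂ) =
      ((2 * Real.pi : ℝ) : ℂ) ^ (-(n : ℤ)) *
      (((lam ^ (-lam) * (1 + lam) ^ (1 + lam) : ℝ)) : ℂ) ^ (n * (n - 1) / 2) *
      ∫ θ : Fin n → ℝ in Set.univ.pi (fun _ : Fin n => Set.Icc (-Real.pi) Real.pi),
        Complex.exp (-Complex.I * (ℓ : ℂ) * ∑ j, (θ j : ℂ)) *
        ∏ p ∈ Finset.univ.filter (fun p : Fin n × Fin n => p.1 < p.2),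
          (1 - (lam : ℂ) * (Complex.exp (Complex.I * ((θ p.1 : ℂ) + (θ p.2 : ℂ))) - 1))⁻¹ := by
  classical
  have hn1 : (1:ℝ) < (n:ℝ) := by exact_mod_cast lt_of_lt_of_le (by norm_num) hn
  have hx : 0 < lam := by
    rw [hlam]; apply div_pos
    · exact_mod_cast Nat.lt_of_lt_of_le Nat.zero_lt_one hℓ
    · linarith
  have hy : (0:ℝ) < 1 + lam := by linarith
  set q : ℝ := lam / (1 + lam) with hqdef
  have hq0 : 0 ≤ q := le_of_lt (div_pos hx hy)
  have hq1 : q < 1 := by rw [hqdef, div_lt_one hy]; linarith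
  have hwnorm : ∀ (θ : Fin n → ℝ) (p : Pairs n), ‖wfun n q θ p‖ = q := wfun_norm n q hq0
  have hgs : ∀ (θ : Fin n → ℝ) (p : Pairs n), Summable (fun k : ℕ => ‖(wfun n q θ p) ^ k‖) := by
    intro θ p
    refine Summable.congr (summable_geometric_of_lt_one hq0 hq1) fun k => ?_
    rw [norm_pow, hwnorm]
  have hfac : ∀ (θ : Fin n → ℝ) (p : Pairs n),
      (1 - (lam : ℂ) * (Complex.exp (Complex.I * ((θ p.val.1 : ℂ) + (θ p.val.2 : ℂ))) - 1))⁻¹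
        = ((1 + lam : ℝ) : ℂ)⁻¹ * ∑' k : ℕ, (wfun n q θ p) ^ k := by
    intro θ p
    rw [tsum_geometric_of_norm_lt_one (by rw [hwnorm]; exact hq1)]
    have hlamq : (lam : ℂ) = (1 + (lam : ℂ)) * (q : ℂ) := by
      have : lam = (1 + lam) * q := by rw [hqdef]; field_simp
      exact_mod_cast congrArg (Complex.ofReal) this
    have hfactor : (1 - (lam : ℂ) *
          (Complex.exp (Complex.I * ((θ p.val.1 : ℂ) + (θ p.val.2 : ℂ))) - 1))
        = ((1 + lam : ℝ) : ℂ) * (1 - wfun n q θ p) := by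
      unfold wfun
      push_cast
      linear_combination (-Complex.exp (Complex.I * ((θ p.val.1 : ℂ) + (θ p.val.2 : ℂ)))) * hlamq
    rw [hfactor, mul_inv]
  -- pointwise expansion of the integrand
  have hpt : ∀ θ : Fin n → ℝ,
      Complex.exp (-Complex.I * (ℓ : ℂ) * ∑ j, (θ j : ℂ)) *
        ∏ p ∈ Finset.univ.filter (fun p : Fin n × Fin n => p.1 < p.2),
          (1 - (lam : ℂ) * (Complex.exp (Complex.I * ((θ p.1 : ℂ) + (θ p.2 : ℂ))) - 1))⁻¹
      = (((1 + lam : ℝ) : ℂ)⁻¹) ^ (Fintype.card (Pairs n)) *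
          ∑' m : Pairs n → ℕ, Ffun n ℓ q m θ := by
    intro θ
    rw [Finset.prod_subtype (p := fun p : Fin n × Fin n => p.1 < p.2)
        (Finset.univ.filter (fun p : Fin n × Fin n => p.1 < p.2))
        (fun p => by simp)
        (fun p : Fin n × Fin n =>
          (1 - (lam : ℂ) * (Complex.exp (Complex.I * ((θ p.1 : ℂ) + (θ p.2 : ℂ))) - 1))⁻¹)]
    rw [Finset.prod_congr rfl fun (p : Pairs n) _ => hfac θ p, Finset.prod_mul_distrib,
      Finset.prod_const, Finset.card_univ,
      ← (prod_tsum_pi (fun p : Pairs n => fun k : ℕ => (wfun n q θ p) ^ k) (hgs θ)).2]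
    have hts : (∑' m : Pairs n → ℕ, Ffun n ℓ q m θ)
        = Complex.exp (-Complex.I * (ℓ : ℂ) * ∑ j, (θ j : ℂ)) *
          ∑' m : Pairs n → ℕ, ∏ p : Pairs n, (wfun n q θ p) ^ (m p) := by
      rw [← tsum_mul_left]
      exact tsum_congr fun m => rfl
    rw [hts]
    ring
  set box := Set.univ.pi (fun _ : Fin n => Set.Icc (-Real.pi) Real.pi) with hboxdef
  have hIcompact : IsCompact box := isCompact_univ_pi fun _ => isCompact_Icc
  have hint : ∀ m : Pairs n → ℕ, IntegrableOn (Ffun n ℓ q m) box := fun m =>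
    (Ffun_continuous n ℓ q m).continuousOn.integrableOn_compact hIcompact
  have hvol : (volume box).toReal = (2 * Real.pi) ^ n := by
    rw [hboxdef, volume_pi_pi]
    simp only [Real.volume_Icc]
    rw [show Real.pi - -Real.pi = 2 * Real.pi by ring, Finset.prod_const, Finset.card_univ,
      Fintype.card_fin, ENNReal.toReal_pow, ENNReal.toReal_ofReal (by positivity)]
  have hnormint : ∀ m : Pairs n → ℕ,
      (∫ θ in box, ‖Ffun n ℓ q m θ‖) = (∏ p : Pairs n, q ^ (m p)) * (2 * Real.pi) ^ n := by
    intro m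
    rw [show (fun θ : Fin n → ℝ => ‖Ffun n ℓ q m θ‖) =
        fun _ : Fin n → ℝ => ∏ p : Pairs n, q ^ (m p) from funext (Ffun_norm n ℓ q hq0 m)]
    rw [setIntegral_const, measureReal_def, hvol, smul_eq_mul, mul_comm]
  have hsum_norm : Summable (fun m : Pairs n → ℕ => ∏ p : Pairs n, q ^ (m p)) := by
    have h1 := (prod_tsum_pi (fun _ : Pairs n => fun k : ℕ => ((q : ℂ)) ^ k) (fun p => by
      refine Summable.congr (summable_geometric_of_lt_one hq0 hq1) fun k => ?_
      rw [norm_pow, Complex.norm_real, Real.norm_of_nonneg hq0])).1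
    refine h1.congr fun m => ?_
    rw [norm_prod]
    exact Finset.prod_congr rfl fun p _ => by
      rw [norm_pow, Complex.norm_real, Real.norm_of_nonneg hq0]
  have hswap : (∑' m : Pairs n → ℕ, ∫ θ in box, Ffun n ℓ q m θ)
      = ∫ θ in box, ∑' m : Pairs n → ℕ, Ffun n ℓ q m θ := by
    refine integral_tsum_of_summable_integral_norm (fun m => hint m) ?_
    refine Summable.congr (hsum_norm.mul_right ((2 * Real.pi) ^ n)) fun m => ?_
    rw [← hnormint m]
  -- counting
  have hTfin : Set.Finite {m : Pairs n → ℕ | ∀ j, SS m j = ℓ} := T_finite n ℓ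
  have hcard : hTfin.toFinset.card = M n ℓ := by
    have h1 : M n ℓ = Nat.card {m : Pairs n → ℕ // ∀ j, SS m j = ℓ} :=
      (Nat.card_congr (matEquiv n ℓ)).symm
    rw [h1, ← Set.ncard_eq_toFinset_card _ hTfin, ← Nat.card_coe_set_eq]
    exact Nat.card_congr (Equiv.subtypeEquivRight fun m => Iff.rfl)
  have htsum_val : (∑' m : Pairs n → ℕ,
        (if (∀ j, SS m j = ℓ) then ((2 * Real.pi : ℝ) : ℂ) ^ n * ∏ p : Pairs n, ((q : ℂ)) ^ (m p)
         else 0))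
      = (M n ℓ : ℂ) * (((2 * Real.pi : ℝ) : ℂ) ^ n * ((q : ℝ) : ℂ) ^ (n * ℓ / 2)) := by
    rw [tsum_eq_sum (s := hTfin.toFinset) (fun m hm => if_neg (by
      simpa [Set.Finite.mem_toFinset] using hm))]
    rw [Finset.sum_congr rfl (fun m hm => by
      have hmem : ∀ j, SS m j = ℓ := by simpa [Set.Finite.mem_toFinset] using hm
      rw [if_pos hmem, Finset.prod_pow_eq_pow_sum,
        show (∑ p : Pairs n, m p) = n * ℓ / 2 by
          have := two_sum_eq m hmem; omega])]
    rw [Finset.sum_const, hcard, nsmul_eq_mul]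
  -- put it together
  rw [show (fun θ : Fin n → ℝ =>
      Complex.exp (-Complex.I * (ℓ : ℂ) * ∑ j, (θ j : ℂ)) *
        ∏ p ∈ Finset.univ.filter (fun p : Fin n × Fin n => p.1 < p.2),
          (1 - (lam : ℂ) * (Complex.exp (Complex.I * ((θ p.1 : ℂ) + (θ p.2 : ℂ))) - 1))⁻¹)
    = fun θ : Fin n → ℝ => (((1 + lam : ℝ) : ℂ)⁻¹) ^ (Fintype.card (Pairs n)) *
          ∑' m : Pairs n → ℕ, Ffun n ℓ q m θ from funext hpt]
  rw [MeasureTheory.integral_const_mul, ← hswap,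
    tsum_congr (fun m => Ffun_integral n ℓ q m), htsum_val, card_pairs n]
  -- final scalar identity
  by_cases hM : M n ℓ = 0
  · rw [hM]
    push_cast
    ring
  · have hne : hTfin.toFinset.Nonempty := by
      rw [← Finset.card_pos, hcard]
      omega
    obtain ⟨m₀, hm₀⟩ := hne
    have hm₀' : ∀ j, SS m₀ j = ℓ := by simpa [Set.Finite.mem_toFinset] using hm₀
    have hE : 2 * (n * ℓ / 2) = n * ℓ := by
      have := two_sum_eq m₀ hm₀'
      omega
    have hK : 2 * (n * (n - 1) / 2) = n * (n - 1) := by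
      have h1 : Even ((n - 1) * (n - 1 + 1)) := Nat.even_mul_succ_self (n - 1)
      have h2 : (n - 1) * (n - 1 + 1) = n * (n - 1) := by
        rw [show n - 1 + 1 = n by omega]; ring
      rw [h2] at h1
      exact Nat.mul_div_cancel' (even_iff_two_dvd.mp h1)
    have hscalar := scalar_id n ℓ (n * (n - 1) / 2) (n * ℓ / 2) hn hℓ lam hlam hK hE
    have key : (((lam ^ (-lam) * (1 + lam) ^ (1 + lam) : ℝ)) : ℂ) ^ (n * (n - 1) / 2) *
        ((((1 + lam : ℝ) : ℂ))⁻¹) ^ (n * (n - 1) / 2) * ((q : ℝ) : ℂ) ^ (n * ℓ / 2) = 1 := by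
      exact_mod_cast congrArg (Complex.ofReal) hscalar
    have h2pi : ((2 * Real.pi : ℝ) : ℂ) ≠ 0 := by
      exact_mod_cast ne_of_gt (by positivity : (0:ℝ) < 2 * Real.pi)
    rw [show ((2 * Real.pi : ℝ) : ℂ) ^ (-(n : ℤ)) = (((2 * Real.pi : ℝ) : ℂ) ^ n)⁻¹ by
      rw [zpow_neg, zpow_natCast]]
    rw [show (((2 * Real.pi : ℝ) : ℂ) ^ n)⁻¹ *
        (((lam ^ (-lam) * (1 + lam) ^ (1 + lam) : ℝ)) : ℂ) ^ (n * (n - 1) / 2) *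
        ((((1 + lam : ℝ) : ℂ)⁻¹) ^ (n * (n - 1) / 2) *
          ((M n ℓ : ℂ) * (((2 * Real.pi : ℝ) : ℂ) ^ n * ((q : ℝ) : ℂ) ^ (n * ℓ / 2))))
      = (M n ℓ : ℂ) * ((((2 * Real.pi : ℝ) : ℂ) ^ n)⁻¹ * ((2 * Real.pi : ℝ) : ℂ) ^ n) *
        ((((lam ^ (-lam) * (1 + lam) ^ (1 + lam) : ℝ)) : ℂ) ^ (n * (n - 1) / 2) *
          ((((1 + lam : ℝ) : ℂ))⁻¹) ^ (n * (n - 1) / 2) * ((q : ℝ) : ℂ) ^ (n * ℓ / 2)) by ring]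
    rw [inv_mul_cancel₀ (pow_ne_zero _ h2pi), key, mul_one, mul_one]
end

section
/- Let n ≥ 2, let λ > 0, set c = 1 − √((n−2)/(2(n−1))), and for z ∈ ℝ^n define θⱼ = (zⱼ − (c/n)Σ_{k=1}^n zₖ)/(1+λ) and μₘ = Σ_{j=1}^n zⱼ^m. Then (1+λ)·Σ_{j=1}^n θⱼ = (1−c)·μ₁ and (1+λ)²·Σ_{1≤j<k≤n} (θⱼ+θₖ)² = (n−2)·μ₂. -/
open Finset

lemma swap_sum {n : ℕ} (f : Fin n → Fin n → ℝ) (hf : ∀ a b, f a b = f b a) :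
    ∑ p ∈ Finset.univ.filter (fun p : Fin n × Fin n => p.1 < p.2), f p.1 p.2
      = ∑ p ∈ Finset.univ.filter (fun p : Fin n × Fin n => p.2 < p.1), f p.1 p.2 := by
  refine Finset.sum_nbij' (fun p => Prod.swap p) (fun p => Prod.swap p) ?_ ?_ ?_ ?_ ?_ <;>
    simp +contextual [hf]

lemma pairsum {n : ℕ} (w : Fin n → ℝ) :
    2 * ∑ p ∈ Finset.univ.filter (fun p : Fin n × Fin n => p.1 < p.2), (w p.1 + w p.2) ^ 2
      = ((n : ℝ) - 2) * (2 * ∑ j, (w j) ^ 2) + 2 * (∑ j, w j) ^ 2 := by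
  have htri : ∑ p : Fin n × Fin n, (w p.1 + w p.2) ^ 2
      = (∑ p ∈ Finset.univ.filter (fun p : Fin n × Fin n => p.1 < p.2), (w p.1 + w p.2) ^ 2)
        + ((∑ p ∈ Finset.univ.filter (fun p : Fin n × Fin n => p.2 < p.1), (w p.1 + w p.2) ^ 2)
        + ∑ p ∈ Finset.univ.filter (fun p : Fin n × Fin n => p.1 = p.2), (w p.1 + w p.2) ^ 2) := by
    rw [← Finset.sum_filter_add_sum_filter_not Finset.univ (fun p : Fin n × Fin n => p.1 < p.2),
      ← Finset.sum_filter_add_sum_filter_not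
        (Finset.univ.filter (fun p : Fin n × Fin n => ¬ p.1 < p.2))
        (fun p : Fin n × Fin n => p.2 < p.1)]
    congr 2
    · refine Finset.sum_congr ?_ fun _ _ => rfl
      rw [Finset.filter_filter]
      ext p
      simp only [Finset.mem_filter, Finset.mem_univ, true_and, Fin.lt_def]
      omega
    · refine Finset.sum_congr ?_ fun _ _ => rfl
      rw [Finset.filter_filter]
      ext p
      simp only [Finset.mem_filter, Finset.mem_univ, true_and, Fin.lt_def, Fin.ext_iff]
      omega
  have hswap := swap_sum (fun a b => (w a + w b) ^ 2) (fun a b => by ring)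
  have hdiag : ∑ p ∈ Finset.univ.filter (fun p : Fin n × Fin n => p.1 = p.2),
      (w p.1 + w p.2) ^ 2 = ∑ j, (w j + w j) ^ 2 := by
    refine Finset.sum_nbij' (fun p => p.1) (fun j => (j, j)) ?_ ?_ ?_ ?_ ?_ <;>
      simp +contextual [Prod.ext_iff]
  have hfull : ∑ p : Fin n × Fin n, (w p.1 + w p.2) ^ 2
      = 2 * (n : ℝ) * ∑ j, (w j) ^ 2 + 2 * (∑ j, w j) ^ 2 := by
    rw [Fintype.sum_prod_type]
    have key : ∀ a : Fin n, ∑ b, (w a + w b) ^ 2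
        = (n : ℝ) * w a ^ 2 + 2 * (∑ j, w j) * w a + ∑ j, w j ^ 2 := by
      intro a
      have e : ∀ b, (w a + w b) ^ 2 = w a ^ 2 + 2 * w a * w b + w b ^ 2 := fun b => by ring
      simp_rw [e]
      rw [Finset.sum_add_distrib, Finset.sum_add_distrib, ← Finset.mul_sum,
        Finset.sum_const, Finset.card_univ, Fintype.card_fin, nsmul_eq_mul]
      ring
    simp_rw [key]
    rw [Finset.sum_add_distrib, Finset.sum_add_distrib, ← Finset.mul_sum, ← Finset.mul_sum,
      Finset.sum_const, Finset.card_univ, Fintype.card_fin, nsmul_eq_mul]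
    ring
  have hsq : ∑ j, (w j + w j) ^ 2 = 4 * ∑ j, (w j) ^ 2 := by
    rw [Finset.mul_sum]; exact Finset.sum_congr rfl fun j _ => by ring
  rw [htri, ← hswap, hdiag, hsq] at hfull
  linarith

theorem stmt_6 (n : ℕ) (hn : 2 ≤ n) (lam : ℝ) (hlam : 0 < lam)
    (c : ℝ) (hc : c = 1 - Real.sqrt (((n : ℝ) - 2) / (2 * ((n : ℝ) - 1))))
    (z : Fin n → ℝ)
    (θ : Fin n → ℝ) (hθ : ∀ j, θ j = (z j - (c / n) * ∑ k, z k) / (1 + lam))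
    (μ : ℕ → ℝ) (hμ : ∀ m, μ m = ∑ j, z j ^ m) :
    (1 + lam) * ∑ j, θ j = (1 - c) * μ 1 ∧
    (1 + lam) ^ 2 * ∑ p ∈ Finset.univ.filter (fun p : Fin n × Fin n => p.1 < p.2),
        (θ p.1 + θ p.2) ^ 2 = ((n : ℝ) - 2) * μ 2 := by
  have hl : (1 : ℝ) + lam ≠ 0 := by linarith
  have hn0 : (n : ℝ) ≠ 0 := by positivity
  have hn2 : (2 : ℝ) ≤ n := by exact_mod_cast hn
  have hcsq : 2 * ((n : ℝ) - 1) * (c ^ 2 - 2 * c) + n = 0 := by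
    have hnn : (0 : ℝ) ≤ ((n : ℝ) - 2) / (2 * ((n : ℝ) - 1)) := by
      apply div_nonneg <;> linarith
    have hs : Real.sqrt (((n : ℝ) - 2) / (2 * ((n : ℝ) - 1))) ^ 2
        = ((n : ℝ) - 2) / (2 * ((n : ℝ) - 1)) := Real.sq_sqrt hnn
    have hne : (2 : ℝ) * ((n : ℝ) - 1) ≠ 0 := by
      intro h; nlinarith
    have hcc : c ^ 2 - 2 * c = ((n : ℝ) - 2) / (2 * ((n : ℝ) - 1)) - 1 := by
      rw [hc]; nlinarith [hs]
    rw [hcc]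
    have h1 : (n : ℝ) - 1 ≠ 0 := by intro h; nlinarith
    field_simp
    ring
  constructor
  · simp only [hθ, hμ]
    rw [← Finset.sum_div, mul_div_cancel₀ _ hl, Finset.sum_sub_distrib,
      Finset.sum_const, Finset.card_univ, Fintype.card_fin, nsmul_eq_mul]
    field_simp
  · set w : Fin n → ℝ := fun j => z j - (c / n) * ∑ k, z k with hw
    have hθw : ∀ p : Fin n × Fin n, (θ p.1 + θ p.2) ^ 2 = ((w p.1 + w p.2) / (1 + lam)) ^ 2 := by
      intro p; rw [hθ, hθ]; ring
    simp_rw [hθw, div_pow, ← Finset.sum_div, mul_div_cancel₀ _ (pow_ne_zero 2 hl)]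
    have hps := pairsum w
    have hS : ∑ j, w j = (1 - c) * ∑ k, z k := by
      simp only [hw]
      rw [Finset.sum_sub_distrib, Finset.sum_const, Finset.card_univ, Fintype.card_fin,
        nsmul_eq_mul]
      field_simp
    have hQ : ∑ j, (w j) ^ 2 = μ 2 - (2 * c / n - c ^ 2 / n) * (∑ k, z k) ^ 2 := by
      simp only [hw, hμ]
      have e : ∀ j : Fin n, (z j - (c / n) * ∑ k, z k) ^ 2
          = z j ^ 2 - (2 * (c / n) * ∑ k, z k) * z j + (c / n * ∑ k, z k) ^ 2 :=
        fun j => by ring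
      rw [Finset.sum_congr rfl fun j _ => e j, Finset.sum_add_distrib,
        Finset.sum_sub_distrib, Finset.sum_const, Finset.card_univ, Fintype.card_fin,
        nsmul_eq_mul, ← Finset.mul_sum]
      field_simp
      ring
    rw [hS, hQ] at hps
    have h2 : ((n : ℝ) - 2) * (2 * c / n - c ^ 2 / n) = (1 - c) ^ 2 := by
      field_simp
      linear_combination -hcsq
    have key : ((n : ℝ) - 2) * (μ 2 - (2 * c / n - c ^ 2 / n) * (∑ k, z k) ^ 2)
        + ((1 - c) * ∑ k, z k) ^ 2 = ((n : ℝ) - 2) * μ 2 := by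
      linear_combination -(∑ k, z k) ^ 2 * h2
    linear_combination hps / 2 + key
end

section
/- Let n ≥ 2, let λ > 0, set c = 1 − √((n−2)/(2(n−1))), and for z ∈ ℝ^n define θⱼ = (zⱼ − (c/n)Σ_{k=1}^n zₖ)/(1+λ) and μₘ = Σ_{j=1}^n zⱼ^m. Then (1+λ)⁴·Σ_{1≤j<k≤n} (θⱼ+θₖ)⁴ = (n−8)·μ₄ + 3·μ₂² + (4(1−2c) + 32c/n)·μ₁μ₃ − (24c(1−c)/n + 48c²/n²)·μ₁²μ₂ + (8c²(1−c)(3−c)/n² + 8c³(4−c)/n³)·μ₁⁴. -/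
lemma two_mul_sum_pairs {n : ℕ} (f : Fin n → Fin n → ℝ) (hf : ∀ j k, f j k = f k j) :
    2 * ∑ p ∈ Finset.univ.filter (fun p : Fin n × Fin n => p.1 < p.2), f p.1 p.2
      = (∑ j, ∑ k, f j k) - ∑ j, f j j := by
  classical
  have htotal : (∑ j, ∑ k, f j k)
      = ∑ p ∈ (Finset.univ : Finset (Fin n × Fin n)), f p.1 p.2 := by
    rw [← Finset.univ_product_univ, Finset.sum_product]
  have hsplit := Finset.sum_filter_add_sum_filter_not (Finset.univ : Finset (Fin n × Fin n))
    (fun p => p.1 < p.2) (fun p => f p.1 p.2)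
  have hsplit2 := Finset.sum_filter_add_sum_filter_not
    (Finset.univ.filter (fun p : Fin n × Fin n => ¬ p.1 < p.2))
    (fun p => p.2 < p.1) (fun p => f p.1 p.2)
  have hA : (Finset.univ.filter (fun p : Fin n × Fin n => ¬ p.1 < p.2)).filter
      (fun p => p.2 < p.1) = Finset.univ.filter (fun p : Fin n × Fin n => p.2 < p.1) := by
    rw [Finset.filter_filter]
    apply Finset.filter_congr
    intro p _
    constructor
    · exact fun h => h.2
    · exact fun h => ⟨fun h' => absurd h (not_lt_of_gt h'), h⟩
  have hB : (Finset.univ.filter (fun p : Fin n × Fin n => ¬ p.1 < p.2)).filter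
      (fun p => ¬ p.2 < p.1) = Finset.univ.filter (fun p : Fin n × Fin n => p.1 = p.2) := by
    rw [Finset.filter_filter]
    apply Finset.filter_congr
    intro p _
    constructor
    · exact fun h => le_antisymm (not_lt.1 h.2) (not_lt.1 h.1)
    · exact fun h => ⟨by rw [h]; exact lt_irrefl _, by rw [h]; exact lt_irrefl _⟩
  have hswap : ∑ p ∈ Finset.univ.filter (fun p : Fin n × Fin n => p.2 < p.1), f p.1 p.2
      = ∑ p ∈ Finset.univ.filter (fun p : Fin n × Fin n => p.1 < p.2), f p.1 p.2 := by
    apply Finset.sum_nbij' (i := Prod.swap) (j := Prod.swap)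
    · intro p hp; simp only [Finset.mem_filter, Finset.mem_univ, true_and] at hp ⊢; exact hp
    · intro p hp; simp only [Finset.mem_filter, Finset.mem_univ, true_and] at hp ⊢; exact hp
    · intro p _; simp
    · intro p _; simp
    · intro p _; exact hf p.1 p.2
  have hdiag : ∑ p ∈ Finset.univ.filter (fun p : Fin n × Fin n => p.1 = p.2), f p.1 p.2
      = ∑ j, f j j := by
    apply Finset.sum_nbij' (i := Prod.fst) (j := fun j => (j, j))
    · intro p _; simp
    · intro j _; simp
    · intro p hp
      simp only [Finset.mem_filter, Finset.mem_univ, true_and] at hp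
      exact Prod.ext rfl hp
    · intro j _; rfl
    · intro p hp
      simp only [Finset.mem_filter, Finset.mem_univ, true_and] at hp
      rw [← hp]
  rw [hA, hB, hswap, hdiag] at hsplit2
  rw [htotal, ← Finset.univ_product_univ, Finset.univ_product_univ, ← hsplit, ← hsplit2]
  ring

theorem stmt_8 (n : ℕ) (hn : 2 ≤ n) (lam : ℝ) (hlam : 0 < lam)
    (c : ℝ) (hc : c = 1 - Real.sqrt (((n : ℝ) - 2) / (2 * ((n : ℝ) - 1))))
    (z : Fin n → ℝ)
    (θ : Fin n → ℝ) (hθ : ∀ j, θ j = (z j - (c / n) * ∑ k, z k) / (1 + lam))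
    (μ : ℕ → ℝ) (hμ : ∀ m, μ m = ∑ j, z j ^ m) :
    (1 + lam) ^ 4 * ∑ p ∈ Finset.univ.filter (fun p : Fin n × Fin n => p.1 < p.2),
        (θ p.1 + θ p.2) ^ 4
      = ((n : ℝ) - 8) * μ 4 + 3 * μ 2 ^ 2 + (4 * (1 - 2 * c) + 32 * c / n) * (μ 1 * μ 3)
        - (24 * c * (1 - c) / n + 48 * c ^ 2 / (n : ℝ) ^ 2) * (μ 1 ^ 2 * μ 2)
        + (8 * c ^ 2 * (1 - c) * (3 - c) / (n : ℝ) ^ 2 + 8 * c ^ 3 * (4 - c) / (n : ℝ) ^ 3) *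
          μ 1 ^ 4 := by
  have hn0 : (n : ℝ) ≠ 0 := by positivity
  have hl0 : (1 + lam) ≠ 0 := by positivity
  set t : ℝ := c / n * μ 1 with ht
  set a : Fin n → ℝ := fun j => z j - t with ha
  -- θ in terms of a
  have hθa : ∀ j, θ j = a j / (1 + lam) := by
    intro j
    rw [hθ j, ha, ht, hμ 1]
    simp [pow_one]
  -- LHS equals sum of (a j + a k)^4 over pairs
  have hLHS : (1 + lam) ^ 4 * ∑ p ∈ Finset.univ.filter (fun p : Fin n × Fin n => p.1 < p.2),
        (θ p.1 + θ p.2) ^ 4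
      = ∑ p ∈ Finset.univ.filter (fun p : Fin n × Fin n => p.1 < p.2),
        (a p.1 + a p.2) ^ 4 := by
    rw [Finset.mul_sum]
    apply Finset.sum_congr rfl
    intro p _
    rw [hθa p.1, hθa p.2]
    field_simp
  rw [hLHS]
  -- power sums of a
  set S1 : ℝ := ∑ j, a j with hS1
  set S2 : ℝ := ∑ j, a j ^ 2 with hS2
  set S3 : ℝ := ∑ j, a j ^ 3 with hS3
  set S4 : ℝ := ∑ j, a j ^ 4 with hS4
  have hcard : ((Finset.univ : Finset (Fin n)).card : ℝ) = (n : ℝ) := by simp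
  -- total double sum
  have htot : (∑ j, ∑ k, (a j + a k) ^ 4)
      = 2 * (n : ℝ) * S4 + 8 * S1 * S3 + 6 * S2 ^ 2 := by
    have hinner : ∀ j : Fin n, (∑ k, (a j + a k) ^ 4)
        = (n : ℝ) * a j ^ 4 + 4 * a j ^ 3 * S1 + 6 * a j ^ 2 * S2 + 4 * a j * S3 + S4 := by
      intro j
      have : ∀ k : Fin n, (a j + a k) ^ 4
          = a j ^ 4 + 4 * a j ^ 3 * a k + 6 * a j ^ 2 * a k ^ 2 + 4 * a j * a k ^ 3
            + a k ^ 4 := by intro k; ring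
      rw [Finset.sum_congr rfl (fun k _ => this k)]
      simp only [Finset.sum_add_distrib, ← Finset.mul_sum, Finset.sum_const, nsmul_eq_mul]
      rw [← hS1, ← hS2, ← hS3, ← hS4, hcard]
    rw [Finset.sum_congr rfl (fun j _ => hinner j)]
    have e1 : (∑ j, 4 * a j ^ 3 * S1) = 4 * S3 * S1 := by
      rw [← Finset.sum_mul, ← Finset.mul_sum, ← hS3]
    have e2 : (∑ j, 6 * a j ^ 2 * S2) = 6 * S2 * S2 := by
      rw [← Finset.sum_mul, ← Finset.mul_sum, ← hS2]
    have e3 : (∑ j : Fin n, 4 * a j * S3) = 4 * S1 * S3 := by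
      rw [← Finset.sum_mul, ← Finset.mul_sum, ← hS1]
    simp only [Finset.sum_add_distrib, ← Finset.mul_sum, Finset.sum_const, nsmul_eq_mul]
    rw [e1, e2, e3, ← hS4, hcard]
    ring
  have hdiag : (∑ j, (a j + a j) ^ 4) = 16 * S4 := by
    have : ∀ j : Fin n, (a j + a j) ^ 4 = 16 * a j ^ 4 := by intro j; ring
    rw [Finset.sum_congr rfl (fun j _ => this j), ← Finset.mul_sum, ← hS4]
  have hpairs := two_mul_sum_pairs (fun j k => (a j + a k) ^ 4) (fun j k => by ring)
  rw [htot, hdiag] at hpairs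
  have hpairs' : (∑ p ∈ Finset.univ.filter (fun p : Fin n × Fin n => p.1 < p.2),
      (a p.1 + a p.2) ^ 4)
      = ((n : ℝ) - 8) * S4 + 4 * S1 * S3 + 3 * S2 ^ 2 := by
    linarith [hpairs]
  rw [hpairs']
  -- express S_m in terms of μ
  have hSm1 : S1 = μ 1 - (n : ℝ) * t := by
    rw [hS1, hμ 1]
    simp only [ha, Finset.sum_sub_distrib, Finset.sum_const, nsmul_eq_mul, hcard, pow_one]
  have hSm2 : S2 = μ 2 - 2 * t * μ 1 + (n : ℝ) * t ^ 2 := by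
    rw [hS2, hμ 2, hμ 1]
    have : ∀ j : Fin n, a j ^ 2 = z j ^ 2 - 2 * t * z j ^ 1 + t ^ 2 := by
      intro j; rw [ha]; ring
    rw [Finset.sum_congr rfl (fun j _ => this j)]
    simp only [Finset.sum_add_distrib, Finset.sum_sub_distrib, ← Finset.mul_sum,
      Finset.sum_const, nsmul_eq_mul, hcard]
  have hSm3 : S3 = μ 3 - 3 * t * μ 2 + 3 * t ^ 2 * μ 1 - (n : ℝ) * t ^ 3 := by
    rw [hS3, hμ 3, hμ 2, hμ 1]
    have : ∀ j : Fin n, a j ^ 3 = z j ^ 3 - 3 * t * z j ^ 2 + 3 * t ^ 2 * z j ^ 1 - t ^ 3 := by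
      intro j; rw [ha]; ring
    rw [Finset.sum_congr rfl (fun j _ => this j)]
    simp only [Finset.sum_add_distrib, Finset.sum_sub_distrib, ← Finset.mul_sum,
      Finset.sum_const, nsmul_eq_mul, hcard]
  have hSm4 : S4 = μ 4 - 4 * t * μ 3 + 6 * t ^ 2 * μ 2 - 4 * t ^ 3 * μ 1 + (n : ℝ) * t ^ 4 := by
    rw [hS4, hμ 4, hμ 3, hμ 2, hμ 1]
    have : ∀ j : Fin n, a j ^ 4 = z j ^ 4 - 4 * t * z j ^ 3 + 6 * t ^ 2 * z j ^ 2
        - 4 * t ^ 3 * z j ^ 1 + t ^ 4 := by intro j; rw [ha]; ring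
    rw [Finset.sum_congr rfl (fun j _ => this j)]
    simp only [Finset.sum_add_distrib, Finset.sum_sub_distrib, ← Finset.mul_sum,
      Finset.sum_const, nsmul_eq_mul, hcard]
  rw [hSm1, hSm2, hSm3, hSm4, ht]
  field_simp
  ring
end

section
/- There is an absolute constant C > 0 such that for every λ > 0 and every real X there exists a complex number η with |η| ≤ C·(λ + λ⁵)·|X|⁵ such that (1 − λ(e^{iX} − 1))^{−1} = exp(iλX − (1/2)λ(1+λ)X² − (i/6)λ(1+λ)(1+2λ)X³ + (1/24)λ(1+λ)(1+6λ+6λ²)X⁴ + η). -/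
set_option maxHeartbeats 1000000


lemma aux_pow_le {lam : ℝ} (hl : 0 < lam) {a : ℕ} (h1 : 1 ≤ a) (h5 : a ≤ 5) :
    lam ^ a ≤ lam + lam ^ 5 := by
  rcases le_total lam 1 with h | h
  · have h2 : lam ^ a ≤ lam ^ 1 := pow_le_pow_of_le_one hl.le h h1
    have h3 : 0 < lam ^ 5 := by positivity
    rw [pow_one] at h2; linarith
  · have h2 : lam ^ a ≤ lam ^ 5 := pow_le_pow_right₀ h h5
    linarith

lemma aux_mono {lam X : ℝ} (hl : 0 < lam)
    (hreg : 1/4 < lam * |X| ∨ 1/2 < |X|) {a b : ℕ} (h1 : 1 ≤ a) (hab : a ≤ b) (hb : b ≤ 4) :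
    lam ^ a * |X| ^ b ≤ 1024 * ((lam + lam ^ 5) * |X| ^ 5) := by
  have hA : (0:ℝ) ≤ |X| := abs_nonneg X
  rcases le_or_gt (|X|) (1/2) with hX | hX
  · have hlx : (1:ℝ)/4 ≤ lam * |X| := by
      rcases hreg with h | h
      · exact h.le
      · linarith
    have hXb : |X| ^ b ≤ |X| ^ a := pow_le_pow_of_le_one hA (by linarith) hab
    have key : (lam * |X|) ^ a ≤ 256 * (lam * |X|) ^ 5 := by
      have e1 : ((1:ℝ)/4) ^ (5 - a) ≤ (lam * |X|) ^ (5 - a) :=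
        pow_le_pow_left₀ (by norm_num) hlx _
      have e2 : (lam * |X|) ^ a * ((1/4:ℝ)) ^ (5 - a) ≤ (lam*|X|) ^ a * (lam * |X|) ^ (5 - a) :=
        mul_le_mul_of_nonneg_left e1 (by positivity)
      rw [← pow_add, show a + (5 - a) = 5 by omega] at e2
      have e3 : ((1:ℝ)/4) ^ 4 ≤ ((1:ℝ)/4) ^ (5 - a) :=
        pow_le_pow_of_le_one (by norm_num) (by norm_num) (by omega)
      nlinarith [pow_nonneg (mul_nonneg hl.le hA) a]
    calc lam ^ a * |X| ^ b ≤ lam ^ a * |X| ^ a :=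
          mul_le_mul_of_nonneg_left hXb (by positivity)
      _ = (lam * |X|) ^ a := (mul_pow ..).symm
      _ ≤ 256 * (lam * |X|) ^ 5 := key
      _ = 256 * (lam ^ 5 * |X| ^ 5) := by rw [mul_pow]
      _ ≤ 1024 * ((lam + lam ^ 5) * |X| ^ 5) := by
          nlinarith [pow_pos hl 5, pow_nonneg hA 5, mul_nonneg hl.le (pow_nonneg hA 5)]
  · have hXb : |X| ^ b ≤ 16 * |X| ^ 5 := by
      have e1 : ((1:ℝ)/2) ^ (5 - b) ≤ |X| ^ (5 - b) :=
        pow_le_pow_left₀ (by norm_num) (by linarith) _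
      have e2 : |X| ^ b * ((1/2:ℝ)) ^ (5 - b) ≤ |X| ^ b * |X| ^ (5 - b) :=
        mul_le_mul_of_nonneg_left e1 (by positivity)
      rw [← pow_add, show b + (5 - b) = 5 by omega] at e2
      have e3 : ((1:ℝ)/2) ^ 4 ≤ ((1:ℝ)/2) ^ (5 - b) :=
        pow_le_pow_of_le_one (by norm_num) (by norm_num) (by omega)
      nlinarith [pow_nonneg hA b]
    have hla : lam ^ a ≤ lam + lam ^ 5 := aux_pow_le hl h1 (by omega)
    calc lam ^ a * |X| ^ b ≤ lam ^ a * (16 * |X| ^ 5) :=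
          mul_le_mul_of_nonneg_left hXb (by positivity)
      _ = 16 * (lam ^ a * |X| ^ 5) := by ring
      _ ≤ 16 * ((lam + lam ^ 5) * |X| ^ 5) := by
          have := mul_le_mul_of_nonneg_right hla (pow_nonneg hA 5)
          linarith
      _ ≤ 1024 * ((lam + lam ^ 5) * |X| ^ 5) := by
          nlinarith [pow_nonneg hA 5, pow_pos hl 5]

lemma aux_exp_sub_one (X : ℝ) : ‖Complex.exp (Complex.I * X) - 1‖ ≤ |X| := by
  have h0 : Complex.I * (X:ℂ) = (X:ℂ) * Complex.I := by ring
  rw [h0, Complex.exp_mul_I]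
  have h1 : Complex.cos X + Complex.sin X * Complex.I - 1
      = ((Real.cos X - 1 : ℝ) : ℂ) + ((Real.sin X : ℝ) : ℂ) * Complex.I := by
    rw [← Complex.ofReal_cos, ← Complex.ofReal_sin]
    push_cast
    ring
  rw [h1, Complex.norm_add_mul_I]
  have h2 : (Real.cos X - 1) ^ 2 + Real.sin X ^ 2 = 2 - 2 * Real.cos X := by
    nlinarith [Real.sin_sq_add_cos_sq X]
  rw [h2]
  have h3 : 2 - 2 * Real.cos X ≤ X ^ 2 := by
    nlinarith [Real.one_sub_sq_div_two_le_cos (x := X)]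
  calc Real.sqrt (2 - 2 * Real.cos X) ≤ Real.sqrt (X ^ 2) := Real.sqrt_le_sqrt h3
    _ = |X| := Real.sqrt_sq_eq_abs X


lemma aux_log (lam : ℝ) (hl : 0 < lam) (X : ℝ) (z : ℂ) (hzre : 1 ≤ z.re)
    (hzim : |z.im| ≤ lam * |X|) (habs2 : ‖z‖ ≤ 1 + lam * |X|) :
    ‖Complex.log z‖ ≤ 3 * (lam * |X|) := by
  have hA : (0:ℝ) ≤ |X| := abs_nonneg X
  have habs1 : 1 ≤ ‖z‖ := le_trans hzre (Complex.re_le_norm z)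
  have hargle : |Complex.arg z| ≤ 2 * (lam * |X|) := by
    have h1 : |Complex.arg z| ≤ Real.pi / 2 :=
      Complex.abs_arg_le_pi_div_two_iff.mpr (by linarith)
    have h2 : 2 / Real.pi * |Complex.arg z| ≤ |Real.sin (Complex.arg z)| :=
      Real.mul_abs_le_abs_sin h1
    have h3 : Real.sin (Complex.arg z) = z.im / ‖z‖ := Complex.sin_arg z
    have h4 : |Real.sin (Complex.arg z)| ≤ lam * |X| := by
      rw [h3, abs_div, abs_of_nonneg (by linarith : (0:ℝ) ≤ ‖z‖)]
      have h5 : |z.im| / ‖z‖ ≤ |z.im| / 1 :=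
        div_le_div_of_nonneg_left (abs_nonneg _) one_pos habs1
      rw [div_one] at h5
      linarith
    have hπ : 0 < Real.pi := Real.pi_pos
    have hπ4 : Real.pi ≤ 4 := by linarith [Real.pi_le_four]
    have h6 : 2 * |Complex.arg z| ≤ |Real.sin (Complex.arg z)| * Real.pi := by
      rw [show 2 / Real.pi * |Complex.arg z| = 2 * |Complex.arg z| / Real.pi by ring,
        div_le_iff₀ hπ] at h2
      exact h2
    nlinarith [abs_nonneg (Real.sin (Complex.arg z))]
  have hlogabs : |Real.log (‖z‖)| ≤ lam * |X| := by
    rw [abs_of_nonneg (Real.log_nonneg habs1)]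
    have := Real.log_le_sub_one_of_pos (by linarith : (0:ℝ) < ‖z‖)
    linarith
  have hld : Complex.log z = ((Real.log (‖z‖) : ℝ) : ℂ)
      + ((Complex.arg z : ℝ) : ℂ) * Complex.I := rfl
  rw [hld]
  calc ‖((Real.log (‖z‖) : ℝ) : ℂ) + ((Complex.arg z : ℝ) : ℂ) * Complex.I‖
      ≤ ‖((Real.log (‖z‖) : ℝ) : ℂ)‖ + ‖((Complex.arg z : ℝ) : ℂ) * Complex.I‖ :=
        norm_add_le _ _
    _ = |Real.log (‖z‖)| + |Complex.arg z| := by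
        simp [Complex.norm_real, Real.norm_eq_abs, norm_mul]
    _ ≤ lam * |X| + 2 * (lam * |X|) := add_le_add hlogabs hargle
    _ = 3 * (lam * |X|) := by ring

lemma aux_easy (lam : ℝ) (hl : 0 < lam) (X : ℝ) (y Pc : ℂ) (Lz : ℂ)
    (hny : ‖y‖ = |X|)
    (hPy : Pc = (lam:ℂ) * y + (lam:ℂ) * (1 + lam) / 2 * y ^ 2
      + (lam:ℂ) * (1 + lam) * (1 + 2 * lam) / 6 * y ^ 3
      + (lam:ℂ) * (1 + lam) * (1 + 6 * lam + 6 * (lam:ℂ) ^ 2) / 24 * y ^ 4)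
    (hlog : ‖Lz‖ ≤ 3 * (lam * |X|))
    (hdisj : 1/4 < lam * |X| ∨ 1/2 < |X|) :
    ‖-Lz - Pc‖ ≤ 10000 * (lam + lam ^ 5) * |X| ^ 5 := by
  have hA : (0:ℝ) ≤ |X| := abs_nonneg X
  have hc1 : ‖(lam:ℂ)‖ = lam := by
    rw [Complex.norm_real, Real.norm_eq_abs, abs_of_pos hl]
  have hc2 : ‖(lam:ℂ) * (1 + lam) / 2‖ = lam * (1 + lam) / 2 := by
    have e : (lam:ℂ) * (1 + lam) / 2 = ((lam * (1 + lam) / 2 : ℝ) : ℂ) := by push_cast; ring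
    rw [e, Complex.norm_real, Real.norm_eq_abs, abs_of_nonneg (by nlinarith)]
  have hc3 : ‖(lam:ℂ) * (1 + lam) * (1 + 2 * lam) / 6‖ = lam * (1 + lam) * (1 + 2 * lam) / 6 := by
    have e : (lam:ℂ) * (1 + lam) * (1 + 2 * lam) / 6
        = ((lam * (1 + lam) * (1 + 2 * lam) / 6 : ℝ) : ℂ) := by push_cast; ring
    rw [e, Complex.norm_real, Real.norm_eq_abs, abs_of_nonneg (by nlinarith [mul_pos (mul_pos hl (by linarith : (0:ℝ) < 1 + lam)) (by linarith : (0:ℝ) < 1 + 2 * lam)])]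
  have hc4 : ‖(lam:ℂ) * (1 + lam) * (1 + 6 * lam + 6 * (lam:ℂ) ^ 2) / 24‖
      = lam * (1 + lam) * (1 + 6 * lam + 6 * lam ^ 2) / 24 := by
    have e : (lam:ℂ) * (1 + lam) * (1 + 6 * lam + 6 * (lam:ℂ) ^ 2) / 24
        = ((lam * (1 + lam) * (1 + 6 * lam + 6 * lam ^ 2) / 24 : ℝ) : ℂ) := by push_cast; ring
    rw [e, Complex.norm_real, Real.norm_eq_abs, abs_of_nonneg (by nlinarith [mul_pos (mul_pos hl (by linarith : (0:ℝ) < 1 + lam)) (by nlinarith [sq_nonneg lam] : (0:ℝ) < 1 + 6 * lam + 6 * lam ^ 2)])]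
  have hPcle : ‖Pc‖ ≤ lam * |X| + lam * (1 + lam) / 2 * |X| ^ 2
      + lam * (1 + lam) * (1 + 2 * lam) / 6 * |X| ^ 3
      + lam * (1 + lam) * (1 + 6 * lam + 6 * lam ^ 2) / 24 * |X| ^ 4 := by
    rw [hPy]
    calc ‖_ + _ * y ^ 4‖ ≤ ‖(lam:ℂ) * y + (lam:ℂ) * (1 + lam) / 2 * y ^ 2
          + (lam:ℂ) * (1 + lam) * (1 + 2 * lam) / 6 * y ^ 3‖
          + ‖(lam:ℂ) * (1 + lam) * (1 + 6 * lam + 6 * (lam:ℂ) ^ 2) / 24 * y ^ 4‖ :=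
          norm_add_le _ _
      _ ≤ ‖(lam:ℂ) * y + (lam:ℂ) * (1 + lam) / 2 * y ^ 2‖
          + ‖(lam:ℂ) * (1 + lam) * (1 + 2 * lam) / 6 * y ^ 3‖
          + ‖(lam:ℂ) * (1 + lam) * (1 + 6 * lam + 6 * (lam:ℂ) ^ 2) / 24 * y ^ 4‖ := by
          gcongr; exact norm_add_le _ _
      _ ≤ ‖(lam:ℂ) * y‖ + ‖(lam:ℂ) * (1 + lam) / 2 * y ^ 2‖
          + ‖(lam:ℂ) * (1 + lam) * (1 + 2 * lam) / 6 * y ^ 3‖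
          + ‖(lam:ℂ) * (1 + lam) * (1 + 6 * lam + 6 * (lam:ℂ) ^ 2) / 24 * y ^ 4‖ := by
          gcongr; exact norm_add_le _ _
      _ = lam * |X| + lam * (1 + lam) / 2 * |X| ^ 2
          + lam * (1 + lam) * (1 + 2 * lam) / 6 * |X| ^ 3
          + lam * (1 + lam) * (1 + 6 * lam + 6 * lam ^ 2) / 24 * |X| ^ 4 := by
          rw [norm_mul, norm_mul, norm_mul, norm_mul, norm_pow, norm_pow, norm_pow,
            hny, hc1, hc2, hc3, hc4]
  have htot : ‖-Lz - Pc‖ ≤ ‖Lz‖ + ‖Pc‖ := by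
    calc ‖-Lz - Pc‖ ≤ ‖-Lz‖ + ‖Pc‖ := norm_sub_le _ _
      _ = ‖Lz‖ + ‖Pc‖ := by rw [norm_neg]
  have hexp : lam * |X| + lam * (1 + lam) / 2 * |X| ^ 2
      + lam * (1 + lam) * (1 + 2 * lam) / 6 * |X| ^ 3
      + lam * (1 + lam) * (1 + 6 * lam + 6 * lam ^ 2) / 24 * |X| ^ 4
      = lam ^ 1 * |X| ^ 1 + (1/2) * (lam ^ 1 * |X| ^ 2) + (1/2) * (lam ^ 2 * |X| ^ 2)
      + (1/6) * (lam ^ 1 * |X| ^ 3) + (1/2) * (lam ^ 2 * |X| ^ 3) + (1/3) * (lam ^ 3 * |X| ^ 3)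
      + (1/24) * (lam ^ 1 * |X| ^ 4) + (7/24) * (lam ^ 2 * |X| ^ 4)
      + (1/2) * (lam ^ 3 * |X| ^ 4) + (1/4) * (lam ^ 4 * |X| ^ 4) := by ring
  have m11 := aux_mono hl hdisj (a := 1) (b := 1) (by norm_num) (by norm_num) (by norm_num)
  have m12 := aux_mono hl hdisj (a := 1) (b := 2) (by norm_num) (by norm_num) (by norm_num)
  have m22 := aux_mono hl hdisj (a := 2) (b := 2) (by norm_num) (by norm_num) (by norm_num)
  have m13 := aux_mono hl hdisj (a := 1) (b := 3) (by norm_num) (by norm_num) (by norm_num)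
  have m23 := aux_mono hl hdisj (a := 2) (b := 3) (by norm_num) (by norm_num) (by norm_num)
  have m33 := aux_mono hl hdisj (a := 3) (b := 3) (by norm_num) (by norm_num) (by norm_num)
  have m14 := aux_mono hl hdisj (a := 1) (b := 4) (by norm_num) (by norm_num) (by norm_num)
  have m24 := aux_mono hl hdisj (a := 2) (b := 4) (by norm_num) (by norm_num) (by norm_num)
  have m34 := aux_mono hl hdisj (a := 3) (b := 4) (by norm_num) (by norm_num) (by norm_num)
  have m44 := aux_mono hl hdisj (a := 4) (b := 4) (by norm_num) (by norm_num) (by norm_num)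
  rw [hexp] at hPcle
  have hgoal : 10000 * (lam + lam ^ 5) * |X| ^ 5 = 10000 * ((lam + lam ^ 5) * |X| ^ 5) := by ring
  rw [hgoal]
  have hm11' : lam * |X| = lam ^ 1 * |X| ^ 1 := by ring
  rw [hm11'] at hlog
  have hprod : 0 ≤ (lam + lam ^ 5) * |X| ^ 5 :=
    mul_nonneg (by nlinarith [pow_pos hl 5]) (pow_nonneg hA 5)
  linarith

lemma aux_hard (lam : ℝ) (hl : 0 < lam) (X : ℝ) (y w Pc : ℂ)
    (hw : w = Complex.exp y - 1)
    (hny : ‖y‖ = |X|)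
    (hw_le : ‖w‖ ≤ |X|)
    (hPy : Pc = (lam:ℂ) * y + (lam:ℂ) * (1 + (lam:ℂ)) / 2 * y ^ 2 + (lam:ℂ) * (1 + (lam:ℂ)) * (1 + 2 * (lam:ℂ)) / 6 * y ^ 3 + (lam:ℂ) * (1 + (lam:ℂ)) * (1 + 6 * (lam:ℂ) + 6 * (lam:ℂ) ^ 2) / 24 * y ^ 4)
    (hr1 : lam * |X| ≤ 1/4) (hr2 : |X| ≤ 1/2) :
    ‖-Complex.log (1 - (lam:ℂ) * w) - Pc‖ ≤ 10000 * (lam + lam ^ 5) * |X| ^ 5 := by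
  have hA : (0:ℝ) ≤ |X| := abs_nonneg X
  have hc1 : ‖(lam:ℂ)‖ = lam := by
    rw [Complex.norm_real, Real.norm_eq_abs, abs_of_pos hl]
  obtain ⟨T, hT⟩ : ∃ T : ℂ, T = y + y ^ 2 / 2 + y ^ 3 / 6 + y ^ 4 / 24 := ⟨_, rfl⟩
  obtain ⟨u, hu⟩ : ∃ u : ℂ, u = (lam:ℂ) * w := ⟨_, rfl⟩
  obtain ⟨v, hv⟩ : ∃ v : ℂ, v = (lam:ℂ) * T := ⟨_, rfl⟩
  have hy1 : ‖y‖ ≤ 1 := by rw [hny]; linarith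
  have hnu : ‖u‖ ≤ lam * |X| := by
    rw [hu, norm_mul, hc1]
    exact mul_le_mul_of_nonneg_left hw_le hl.le
  have hnu4 : ‖u‖ ≤ 1/4 := le_trans hnu hr1
  have hnT : ‖T‖ ≤ 4/3 * |X| := by
    have h1 : ‖T‖ ≤ ‖y‖ + ‖y ^ 2 / 2‖ + ‖y ^ 3 / 6‖ + ‖y ^ 4 / 24‖ := by
      rw [hT]
      calc ‖y + y ^ 2 / 2 + y ^ 3 / 6 + y ^ 4 / 24‖
          ≤ ‖y + y ^ 2 / 2 + y ^ 3 / 6‖ + ‖y ^ 4 / 24‖ := norm_add_le _ _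
        _ ≤ ‖y + y ^ 2 / 2‖ + ‖y ^ 3 / 6‖ + ‖y ^ 4 / 24‖ :=
            add_le_add_left (norm_add_le _ _) _
        _ ≤ ‖y‖ + ‖y ^ 2 / 2‖ + ‖y ^ 3 / 6‖ + ‖y ^ 4 / 24‖ :=
            add_le_add_left (add_le_add_left (norm_add_le _ _) _) _
    have h2 : ‖y ^ 2 / 2‖ = |X| ^ 2 / 2 := by rw [norm_div, norm_pow, hny]; norm_num
    have h3 : ‖y ^ 3 / 6‖ = |X| ^ 3 / 6 := by rw [norm_div, norm_pow, hny]; norm_num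
    have h4 : ‖y ^ 4 / 24‖ = |X| ^ 4 / 24 := by rw [norm_div, norm_pow, hny]; norm_num
    rw [h2, h3, h4, hny] at h1
    nlinarith [pow_nonneg hA 2, pow_nonneg hA 3, pow_nonneg hA 4, sq_nonneg (|X|)]
  have hnv : ‖v‖ ≤ 1/3 := by
    rw [hv, norm_mul, hc1]
    calc lam * ‖T‖ ≤ lam * (4/3 * |X|) := mul_le_mul_of_nonneg_left hnT hl.le
      _ = 4/3 * (lam * |X|) := by ring
      _ ≤ 4/3 * (1/4) := by linarith
      _ = 1/3 := by norm_num
  have hnu3 : ‖u‖ ≤ 1/3 := le_trans hnu4 (by norm_num)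
  have hsum : (∑ m ∈ Finset.range 5, y ^ m / (m.factorial : ℂ)) = 1 + T := by
    rw [hT]
    norm_num [Finset.sum_range_succ, Nat.factorial]
    ring
  have hrT : ‖w - T‖ ≤ |X| ^ 5 / 100 := by
    have hb := Complex.exp_bound (x := y) (by rw [hny]; linarith)
      (by norm_num : 0 < 5)
    rw [hsum] at hb
    have he : w - T = Complex.exp y - (1 + T) := by rw [hw]; ring
    rw [he]
    refine le_trans hb ?_
    rw [hny]
    norm_num [Nat.factorial]
    linarith
  -- log Taylor
  have hz1 : (1:ℂ) - (lam:ℂ) * w = 1 + -u := by rw [hu]; ring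
  have hlt : ‖-u‖ < 1 := by rw [norm_neg]; linarith
  have hlogT := Complex.norm_log_sub_logTaylor_le 4 hlt
  have hLT : Complex.logTaylor 5 (-u) = -(u + u ^ 2 / 2 + u ^ 3 / 3 + u ^ 4 / 4) := by
    norm_num [Complex.logTaylor, Finset.sum_range_succ]
    ring
  have hT1 : ‖Complex.log (1 + -u) - Complex.logTaylor 5 (-u)‖ ≤ lam ^ 5 * |X| ^ 5 := by
    refine le_trans hlogT ?_
    rw [norm_neg]
    have e1 : ‖u‖ ^ (4+1) ≤ (lam * |X|) ^ 5 := pow_le_pow_left₀ (norm_nonneg u) hnu _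
    have e2 : (1 - ‖u‖)⁻¹ ≤ (3/4 : ℝ)⁻¹ := by
      apply inv_anti₀ (by norm_num)
      linarith
    have e4 : (0:ℝ) < (1 - ‖u‖)⁻¹ := by apply inv_pos.mpr; linarith
    have e5 : (0:ℝ) ≤ (lam * |X|) ^ 5 := pow_nonneg (mul_nonneg hl.le hA) 5
    have m := mul_le_mul e1 e2 e4.le e5
    rw [show ((3:ℝ)/4)⁻¹ = 4/3 by norm_num, mul_pow] at m
    have h45 : ((4:ℕ) : ℝ) + 1 = 5 := by norm_num
    rw [h45]
    have hnn : (0:ℝ) ≤ lam ^ 5 * |X| ^ 5 :=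
      mul_nonneg (pow_nonneg hl.le 5) (pow_nonneg hA 5)
    linarith
  have hQfac : (u + u ^ 2 / 2 + u ^ 3 / 3 + u ^ 4 / 4) - (v + v ^ 2 / 2 + v ^ 3 / 3 + v ^ 4 / 4) = ((lam:ℂ) * (w - T)) * (1 + (u + v) / 2 + (u * u + u * v + v * v) / 3 + (u * u * u + u * u * v + u * v * v + v * v * v) / 4) := by
    rw [hu, hv]; ring
  have n3 : ‖u * u + u * v + v * v‖ ≤ ‖u‖ * ‖u‖ + ‖u‖ * ‖v‖ + ‖v‖ * ‖v‖ := by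
    calc ‖u * u + u * v + v * v‖ ≤ ‖u * u + u * v‖ + ‖v * v‖ := norm_add_le _ _
      _ ≤ ‖u * u‖ + ‖u * v‖ + ‖v * v‖ := add_le_add_left (norm_add_le _ _) _
      _ = ‖u‖ * ‖u‖ + ‖u‖ * ‖v‖ + ‖v‖ * ‖v‖ := by rw [norm_mul, norm_mul, norm_mul]
  have n4 : ‖u * u * u + u * u * v + u * v * v + v * v * v‖
      ≤ ‖u‖ * ‖u‖ * ‖u‖ + ‖u‖ * ‖u‖ * ‖v‖ + ‖u‖ * ‖v‖ * ‖v‖ + ‖v‖ * ‖v‖ * ‖v‖ := by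
    calc ‖u * u * u + u * u * v + u * v * v + v * v * v‖
        ≤ ‖u * u * u + u * u * v + u * v * v‖ + ‖v * v * v‖ := norm_add_le _ _
      _ ≤ ‖u * u * u + u * u * v‖ + ‖u * v * v‖ + ‖v * v * v‖ :=
          add_le_add_left (norm_add_le _ _) _
      _ ≤ ‖u * u * u‖ + ‖u * u * v‖ + ‖u * v * v‖ + ‖v * v * v‖ :=
          add_le_add_left (add_le_add_left (norm_add_le _ _) _) _
      _ = ‖u‖ * ‖u‖ * ‖u‖ + ‖u‖ * ‖u‖ * ‖v‖ + ‖u‖ * ‖v‖ * ‖v‖ + ‖v‖ * ‖v‖ * ‖v‖ := by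
          simp only [norm_mul]
  have hB : ‖(1 + (u + v) / 2 + (u * u + u * v + v * v) / 3 + (u * u * u + u * u * v + u * v * v + v * v * v) / 4 : ℂ)‖ ≤ 2 := by
    have huu : ‖u‖ * ‖u‖ ≤ 1/3 * (1/3) := mul_le_mul hnu3 hnu3 (norm_nonneg u) (by norm_num)
    have huv : ‖u‖ * ‖v‖ ≤ 1/3 * (1/3) := mul_le_mul hnu3 hnv (norm_nonneg v) (by norm_num)
    have hvv : ‖v‖ * ‖v‖ ≤ 1/3 * (1/3) := mul_le_mul hnv hnv (norm_nonneg v) (by norm_num)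
    have huuu : ‖u‖ * ‖u‖ * ‖u‖ ≤ 1/9 * (1/3) :=
      mul_le_mul (by linarith) hnu3 (norm_nonneg u) (by norm_num)
    have huuv : ‖u‖ * ‖u‖ * ‖v‖ ≤ 1/9 * (1/3) :=
      mul_le_mul (by linarith) hnv (norm_nonneg v) (by norm_num)
    have huvv : ‖u‖ * ‖v‖ * ‖v‖ ≤ 1/9 * (1/3) :=
      mul_le_mul (by linarith) hnv (norm_nonneg v) (by norm_num)
    have hvvv : ‖v‖ * ‖v‖ * ‖v‖ ≤ 1/9 * (1/3) :=
      mul_le_mul (by linarith) hnv (norm_nonneg v) (by norm_num)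
    have t2 : ‖(u + v) / 2‖ ≤ (‖u‖ + ‖v‖) / 2 := by
      rw [norm_div, show ‖(2:ℂ)‖ = 2 from by norm_num]
      exact (div_le_div_iff_of_pos_right (by norm_num)).mpr (norm_add_le _ _)
    have t3 : ‖(u * u + u * v + v * v) / 3‖ ≤ (‖u‖ * ‖u‖ + ‖u‖ * ‖v‖ + ‖v‖ * ‖v‖) / 3 := by
      rw [norm_div, show ‖(3:ℂ)‖ = 3 from by norm_num]
      exact (div_le_div_iff_of_pos_right (by norm_num)).mpr n3
    have t4 : ‖(u * u * u + u * u * v + u * v * v + v * v * v) / 4‖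
        ≤ (‖u‖ * ‖u‖ * ‖u‖ + ‖u‖ * ‖u‖ * ‖v‖ + ‖u‖ * ‖v‖ * ‖v‖ + ‖v‖ * ‖v‖ * ‖v‖) / 4 := by
      rw [norm_div, show ‖(4:ℂ)‖ = 4 from by norm_num]
      exact (div_le_div_iff_of_pos_right (by norm_num)).mpr n4
    have tri : ‖(1 + (u + v) / 2 + (u * u + u * v + v * v) / 3 + (u * u * u + u * u * v + u * v * v + v * v * v) / 4 : ℂ)‖
        ≤ ‖(1:ℂ)‖ + ‖(u + v) / 2‖ + ‖(u * u + u * v + v * v) / 3‖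
          + ‖(u * u * u + u * u * v + u * v * v + v * v * v) / 4‖ := by
      calc ‖(1 + (u + v) / 2 + (u * u + u * v + v * v) / 3 + (u * u * u + u * u * v + u * v * v + v * v * v) / 4 : ℂ)‖
          ≤ ‖(1 : ℂ) + (u + v) / 2 + (u * u + u * v + v * v) / 3‖
            + ‖(u * u * u + u * u * v + u * v * v + v * v * v) / 4‖ := norm_add_le _ _
        _ ≤ ‖(1 : ℂ) + (u + v) / 2‖ + ‖(u * u + u * v + v * v) / 3‖
            + ‖(u * u * u + u * u * v + u * v * v + v * v * v) / 4‖ :=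
            add_le_add_left (norm_add_le _ _) _
        _ ≤ ‖(1:ℂ)‖ + ‖(u + v) / 2‖ + ‖(u * u + u * v + v * v) / 3‖
            + ‖(u * u * u + u * u * v + u * v * v + v * v * v) / 4‖ :=
            add_le_add_left (add_le_add_left (norm_add_le _ _) _) _
    have hone : ‖(1:ℂ)‖ = 1 := norm_one
    linarith
  have hT2 : ‖(u + u ^ 2 / 2 + u ^ 3 / 3 + u ^ 4 / 4) - (v + v ^ 2 / 2 + v ^ 3 / 3 + v ^ 4 / 4)‖ ≤ lam * |X| ^ 5 / 50 := by
    rw [hQfac, norm_mul, norm_mul, hc1]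
    have s1 : lam * ‖w - T‖ ≤ lam * (|X| ^ 5 / 100) := mul_le_mul_of_nonneg_left hrT hl.le
    calc lam * ‖w - T‖ * ‖(1 + (u + v) / 2 + (u * u + u * v + v * v) / 3 + (u * u * u + u * u * v + u * v * v + v * v * v) / 4 : ℂ)‖ ≤ lam * (|X| ^ 5 / 100) * 2 :=
          mul_le_mul s1 hB (norm_nonneg _) (mul_nonneg hl.le (by positivity))
      _ = lam * |X| ^ 5 / 50 := by ring
  have hyk : ∀ k : ℕ, ‖y‖ ^ k ≤ 1 := fun k => pow_le_one₀ (norm_nonneg y) hy1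
  have hg2 : ‖(1/8 : ℂ) + (5/144 : ℂ) * y + (1/144 : ℂ) * y ^ 2 + (1/1152 : ℂ) * y ^ 3‖ ≤ 1 := by
    have step : ‖(1/8 : ℂ) + (5/144 : ℂ) * y + (1/144 : ℂ) * y ^ 2 + (1/1152 : ℂ) * y ^ 3‖ ≤ ‖(1/8 : ℂ)‖ + ‖(5/144 : ℂ) * y‖ + ‖(1/144 : ℂ) * y ^ 2‖ + ‖(1/1152 : ℂ) * y ^ 3‖ := by
      calc ‖(1/8 : ℂ) + (5/144 : ℂ) * y + (1/144 : ℂ) * y ^ 2 + (1/1152 : ℂ) * y ^ 3‖ ≤ ‖(1/8 : ℂ) + (5/144 : ℂ) * y + (1/144 : ℂ) * y ^ 2‖ + ‖(1/1152 : ℂ) * y ^ 3‖ := norm_add_le _ _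
        _ ≤ ‖(1/8 : ℂ) + (5/144 : ℂ) * y‖ + ‖(1/144 : ℂ) * y ^ 2‖ + ‖(1/1152 : ℂ) * y ^ 3‖ := add_le_add_left (norm_add_le _ _) _
        _ ≤ ‖(1/8 : ℂ)‖ + ‖(5/144 : ℂ) * y‖ + ‖(1/144 : ℂ) * y ^ 2‖ + ‖(1/1152 : ℂ) * y ^ 3‖ := add_le_add_left (add_le_add_left (norm_add_le _ _) _) _
    have step2 : ‖(1/8 : ℂ)‖ + ‖(5/144 : ℂ) * y‖ + ‖(1/144 : ℂ) * y ^ 2‖ + ‖(1/1152 : ℂ) * y ^ 3‖ = (1/8 : ℝ) + (5/144 : ℝ) * ‖y‖ + (1/144 : ℝ) * ‖y‖ ^ 2 + (1/1152 : ℝ) * ‖y‖ ^ 3 := by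
      simp [norm_mul, norm_pow]
    rw [step2] at step
    refine le_trans step ?_
    have hynn : (0:ℝ) ≤ ‖y‖ := norm_nonneg y
    linarith [hyk 2, hyk 3]
  have hg3 : ‖(5/12 : ℂ) + (1/4 : ℂ) * y + (1/9 : ℂ) * y ^ 2 + (11/288 : ℂ) * y ^ 3 + (53/5184 : ℂ) * y ^ 4 + (7/3456 : ℂ) * y ^ 5 + (1/3456 : ℂ) * y ^ 6 + (1/41472 : ℂ) * y ^ 7‖ ≤ 1 := by
    have step : ‖(5/12 : ℂ) + (1/4 : ℂ) * y + (1/9 : ℂ) * y ^ 2 + (11/288 : ℂ) * y ^ 3 + (53/5184 : ℂ) * y ^ 4 + (7/3456 : ℂ) * y ^ 5 + (1/3456 : ℂ) * y ^ 6 + (1/41472 : ℂ) * y ^ 7‖ ≤ ‖(5/12 : ℂ)‖ + ‖(1/4 : ℂ) * y‖ + ‖(1/9 : ℂ) * y ^ 2‖ + ‖(11/288 : ℂ) * y ^ 3‖ + ‖(53/5184 : ℂ) * y ^ 4‖ + ‖(7/3456 : ℂ) * y ^ 5‖ + ‖(1/3456 : ℂ) * y ^ 6‖ + ‖(1/41472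 : ℂ) * y ^ 7‖ := by
      calc ‖(5/12 : ℂ) + (1/4 : ℂ) * y + (1/9 : ℂ) * y ^ 2 + (11/288 : ℂ) * y ^ 3 + (53/5184 : ℂ) * y ^ 4 + (7/3456 : ℂ) * y ^ 5 + (1/3456 : ℂ) * y ^ 6 + (1/41472 : ℂ) * y ^ 7‖ ≤ ‖(5/12 : ℂ) + (1/4 : ℂ) * y + (1/9 : ℂ) * y ^ 2 + (11/288 : ℂ) * y ^ 3 + (53/5184 : ℂ) * y ^ 4 + (7/3456 : ℂ) * y ^ 5 + (1/3456 : ℂ) * y ^ 6‖ + ‖(1/41472 : ℂ) * y ^ 7‖ := norm_add_le _ _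
        _ ≤ ‖(5/12 : ℂ) + (1/4 : ℂ) * y + (1/9 : ℂ) * y ^ 2 + (11/288 : ℂ) * y ^ 3 + (53/5184 : ℂ) * y ^ 4 + (7/3456 : ℂ) * y ^ 5‖ + ‖(1/3456 : ℂ) * y ^ 6‖ + ‖(1/41472 : ℂ) * y ^ 7‖ := add_le_add_left (norm_add_le _ _) _
        _ ≤ ‖(5/12 : ℂ) + (1/4 : ℂ) * y + (1/9 : ℂ) * y ^ 2 + (11/288 : ℂ) * y ^ 3 + (53/5184 : ℂ) * y ^ 4‖ + ‖(7/3456 : ℂ) * y ^ 5‖ + ‖(1/3456 : ℂ) * y ^ 6‖ + ‖(1/41472 : ℂ) * y ^ 7‖ := add_le_add_left (add_le_add_left (norm_add_le _ _) _) _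
        _ ≤ ‖(5/12 : ℂ) + (1/4 : ℂ) * y + (1/9 : ℂ) * y ^ 2 + (11/288 : ℂ) * y ^ 3‖ + ‖(53/5184 : ℂ) * y ^ 4‖ + ‖(7/3456 : ℂ) * y ^ 5‖ + ‖(1/3456 : ℂ) * y ^ 6‖ + ‖(1/41472 : ℂ) * y ^ 7‖ := add_le_add_left (add_le_add_left (add_le_add_left (norm_add_le _ _) _) _) _
        _ ≤ ‖(5/12 : ℂ) + (1/4 : ℂ) * y + (1/9 : ℂ) * y ^ 2‖ + ‖(11/288 : ℂ) * y ^ 3‖ + ‖(53/5184 : ℂ) * y ^ 4‖ + ‖(7/3456 : ℂ) * y ^ 5‖ + ‖(1/3456 : ℂ) * y ^ 6‖ + ‖(1/41472 : ℂ) * y ^ 7‖ := add_le_add_left (add_le_add_left (add_le_add_left (add_le_add_left (norm_add_le _ _) _) _) _) _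
        _ ≤ ‖(5/12 : ℂ) + (1/4 : ℂ) * y‖ + ‖(1/9 : ℂ) * y ^ 2‖ + ‖(11/288 : ℂ) * y ^ 3‖ + ‖(53/5184 : ℂ) * y ^ 4‖ + ‖(7/3456 : ℂ) * y ^ 5‖ + ‖(1/3456 : ℂ) * y ^ 6‖ + ‖(1/41472 : ℂ) * y ^ 7‖ := add_le_add_left (add_le_add_left (add_le_add_left (add_le_add_left (add_le_add_left (norm_add_le _ _) _) _) _) _) _
        _ ≤ ‖(5/12 : ℂ)‖ + ‖(1/4 : ℂ) * y‖ + ‖(1/9 : ℂ) * y ^ 2‖ + ‖(11/288 : ℂ) * y ^ 3‖ + ‖(53/5184 : ℂ) * y ^ 4‖ + ‖(7/3456 : ℂ) * y ^ 5‖ + ‖(1/3456 : ℂ) * y ^ 6‖ + ‖(1/41472 : ℂ) * y ^ 7‖ := add_le_add_left (add_le_add_left (add_le_add_left (add_le_add_left (add_le_add_left (add_le_add_left (norm_add_le _ _) _) _) _) _) _) _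
    have step2 : ‖(5/12 : ℂ)‖ + ‖(1/4 : ℂ) * y‖ + ‖(1/9 : ℂ) * y ^ 2‖ + ‖(11/288 : ℂ) * y ^ 3‖ + ‖(53/5184 : ℂ) * y ^ 4‖ + ‖(7/3456 : ℂ) * y ^ 5‖ + ‖(1/3456 : ℂ) * y ^ 6‖ + ‖(1/41472 : ℂ) * y ^ 7‖ = (5/12 : ℝ) + (1/4 : ℝ) * ‖y‖ + (1/9 : ℝ) * ‖y‖ ^ 2 + (11/288 : ℝ) * ‖y‖ ^ 3 + (53/5184 : ℝ) * ‖y‖ ^ 4 + (7/3456 : ℝ) * ‖y‖ ^ 5 + (1/3456 : ℝ) * ‖y‖ ^ 6 + (1/41472 : ℝ) * ‖y‖ ^ 7 := by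
      simp [norm_mul, norm_pow]
    rw [step2] at step
    refine le_trans step ?_
    have hynn : (0:ℝ) ≤ ‖y‖ := norm_nonneg y
    linarith [hyk 2, hyk 3, hyk 4, hyk 5, hyk 6, hyk 7]
  have hg4 : ‖(1/2 : ℂ) + (13/24 : ℂ) * y + (5/12 : ℂ) * y ^ 2 + (47/192 : ℂ) * y ^ 3 + (11/96 : ℂ) * y ^ 4 + (151/3456 : ℂ) * y ^ 5 + (47/3456 : ℂ) * y ^ 6 + (143/41472 : ℂ) * y ^ 7 + (29/41472 : ℂ) * y ^ 8 + (1/9216 : ℂ) * y ^ 9 + (1/82944 : ℂ) * y ^ 10 + (1/1327104 : ℂ) * y ^ 11‖ ≤ 2 := by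
    have step : ‖(1/2 : ℂ) + (13/24 : ℂ) * y + (5/12 : ℂ) * y ^ 2 + (47/192 : ℂ) * y ^ 3 + (11/96 : ℂ) * y ^ 4 + (151/3456 : ℂ) * y ^ 5 + (47/3456 : ℂ) * y ^ 6 + (143/41472 : ℂ) * y ^ 7 + (29/41472 : ℂ) * y ^ 8 + (1/9216 : ℂ) * y ^ 9 + (1/82944 : ℂ) * y ^ 10 + (1/1327104 : ℂ) * y ^ 11‖ ≤ ‖(1/2 : ℂ)‖ + ‖(13/24 : ℂ) * y‖ + ‖(5/12 : ℂ) * y ^ 2‖ + ‖(47/192 : ℂ) * y ^ 3‖ + ‖(11/96 : ℂ) * y ^ 4‖ + ‖(151/3456 : ℂ) * y ^ 5‖ + ‖(47/3456 : ℂ) * y ^ 6‖ + ‖(143/41472 : ℂ) * y ^ 7‖ + ‖(29/41472 : ℂ) * y ^ 8‖ + ‖(1/9216 : ℂ) * y ^ 9‖ + ‖(1/82944 : ℂ) * y ^ 10‖ + ‖(1/1327104 : ℂ) * y ^ 11‖ := by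
      calc ‖(1/2 : ℂ) + (13/24 : ℂ) * y + (5/12 : ℂ) * y ^ 2 + (47/192 : ℂ) * y ^ 3 + (11/96 : ℂ) * y ^ 4 + (151/3456 : ℂ) * y ^ 5 + (47/3456 : ℂ) * y ^ 6 + (143/41472 : ℂ) * y ^ 7 + (29/41472 : ℂ) * y ^ 8 + (1/9216 : ℂ) * y ^ 9 + (1/82944 : ℂ) * y ^ 10 + (1/1327104 : ℂ) * y ^ 11‖ ≤ ‖(1/2 : ℂ) + (13/24 : ℂ) * y + (5/12 : ℂ) * y ^ 2 + (47/192 : ℂ) * y ^ 3 + (11/96 : ℂ) * y ^ 4 + (151/3456 : ℂ) * y ^ 5 + (47/3456 : ℂ) * y ^ 6 + (143/41472 : ℂ) * y ^ 7 + (29/41472 : ℂ) * y ^ 8 + (1/9216 : ℂ) * y ^ 9 + (1/82944 : ℂ) * y ^ 10‖ + ‖(1/1327104 : ℂ) * y ^ 11‖ := norm_add_le _ _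
        _ ≤ ‖(1/2 : ℂ) + (13/24 : ℂ) * y + (5/12 : ℂ) * y ^ 2 + (47/192 : ℂ) * y ^ 3 + (11/96 : ℂ) * y ^ 4 + (151/3456 : ℂ) * y ^ 5 + (47/3456 : ℂ) * y ^ 6 + (143/41472 : ℂ) * y ^ 7 + (29/41472 : ℂ) * y ^ 8 + (1/9216 : ℂ) * y ^ 9‖ + ‖(1/82944 : ℂ) * y ^ 10‖ + ‖(1/1327104 : ℂ) * y ^ 11‖ := add_le_add_left (norm_add_le _ _) _
        _ ≤ ‖(1/2 : ℂ) + (13/24 : ℂ) * y + (5/12 : ℂ) * y ^ 2 + (47/192 : ℂ) * y ^ 3 + (11/96 : ℂ) * y ^ 4 + (151/3456 : ℂ) * y ^ 5 + (47/3456 : ℂ) * y ^ 6 + (143/41472 : ℂ) * y ^ 7 + (29/41472 : ℂ) * y ^ 8‖ + ‖(1/9216 : ℂ) * y ^ 9‖ + ‖(1/82944 : ℂ) * y ^ 10‖ + ‖(1/1327104 : ℂ) * y ^ 11‖ := add_le_add_left (add_le_add_left (norm_add_le _ _) _) _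
        _ ≤ ‖(1/2 : ℂ) + (13/24 : ℂ) * y + (5/12 : ℂ) * y ^ 2 + (47/192 : ℂ) * y ^ 3 + (11/96 : ℂ) * y ^ 4 + (151/3456 : ℂ) * y ^ 5 + (47/3456 : ℂ) * y ^ 6 + (143/41472 : ℂ) * y ^ 7‖ + ‖(29/41472 : ℂ) * y ^ 8‖ + ‖(1/9216 : ℂ) * y ^ 9‖ + ‖(1/82944 : ℂ) * y ^ 10‖ + ‖(1/1327104 : ℂ) * y ^ 11‖ := add_le_add_left (add_le_add_left (add_le_add_left (norm_add_le _ _) _) _) _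
        _ ≤ ‖(1/2 : ℂ) + (13/24 : ℂ) * y + (5/12 : ℂ) * y ^ 2 + (47/192 : ℂ) * y ^ 3 + (11/96 : ℂ) * y ^ 4 + (151/3456 : ℂ) * y ^ 5 + (47/3456 : ℂ) * y ^ 6‖ + ‖(143/41472 : ℂ) * y ^ 7‖ + ‖(29/41472 : ℂ) * y ^ 8‖ + ‖(1/9216 : ℂ) * y ^ 9‖ + ‖(1/82944 : ℂ) * y ^ 10‖ + ‖(1/1327104 : ℂ) * y ^ 11‖ := add_le_add_left (add_le_add_left (add_le_add_left (add_le_add_left (norm_add_le _ _) _) _) _) _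
        _ ≤ ‖(1/2 : ℂ) + (13/24 : ℂ) * y + (5/12 : ℂ) * y ^ 2 + (47/192 : ℂ) * y ^ 3 + (11/96 : ℂ) * y ^ 4 + (151/3456 : ℂ) * y ^ 5‖ + ‖(47/3456 : ℂ) * y ^ 6‖ + ‖(143/41472 : ℂ) * y ^ 7‖ + ‖(29/41472 : ℂ) * y ^ 8‖ + ‖(1/9216 : ℂ) * y ^ 9‖ + ‖(1/82944 : ℂ) * y ^ 10‖ + ‖(1/1327104 : ℂ) * y ^ 11‖ := add_le_add_left (add_le_add_left (add_le_add_left (add_le_add_left (add_le_add_left (norm_add_le _ _) _) _) _) _) _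
        _ ≤ ‖(1/2 : ℂ) + (13/24 : ℂ) * y + (5/12 : ℂ) * y ^ 2 + (47/192 : ℂ) * y ^ 3 + (11/96 : ℂ) * y ^ 4‖ + ‖(151/3456 : ℂ) * y ^ 5‖ + ‖(47/3456 : ℂ) * y ^ 6‖ + ‖(143/41472 : ℂ) * y ^ 7‖ + ‖(29/41472 : ℂ) * y ^ 8‖ + ‖(1/9216 : ℂ) * y ^ 9‖ + ‖(1/82944 : ℂ) * y ^ 10‖ + ‖(1/1327104 : ℂ) * y ^ 11‖ := add_le_add_left (add_le_add_left (add_le_add_left (add_le_add_left (add_le_add_left (add_le_add_left (norm_add_le _ _) _) _) _) _) _) _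
        _ ≤ ‖(1/2 : ℂ) + (13/24 : ℂ) * y + (5/12 : ℂ) * y ^ 2 + (47/192 : ℂ) * y ^ 3‖ + ‖(11/96 : ℂ) * y ^ 4‖ + ‖(151/3456 : ℂ) * y ^ 5‖ + ‖(47/3456 : ℂ) * y ^ 6‖ + ‖(143/41472 : ℂ) * y ^ 7‖ + ‖(29/41472 : ℂ) * y ^ 8‖ + ‖(1/9216 : ℂ) * y ^ 9‖ + ‖(1/82944 : ℂ) * y ^ 10‖ + ‖(1/1327104 : ℂ) * y ^ 11‖ := add_le_add_left (add_le_add_left (add_le_add_left (add_le_add_left (add_le_add_left (add_le_add_left (add_le_add_left (norm_add_le _ _) _) _) _) _) _) _) _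
        _ ≤ ‖(1/2 : ℂ) + (13/24 : ℂ) * y + (5/12 : ℂ) * y ^ 2‖ + ‖(47/192 : ℂ) * y ^ 3‖ + ‖(11/96 : ℂ) * y ^ 4‖ + ‖(151/3456 : ℂ) * y ^ 5‖ + ‖(47/3456 : ℂ) * y ^ 6‖ + ‖(143/41472 : ℂ) * y ^ 7‖ + ‖(29/41472 : ℂ) * y ^ 8‖ + ‖(1/9216 : ℂ) * y ^ 9‖ + ‖(1/82944 : ℂ) * y ^ 10‖ + ‖(1/1327104 : ℂ) * y ^ 11‖ := add_le_add_left (add_le_add_left (add_le_add_left (add_le_add_left (add_le_add_left (add_le_add_left (add_le_add_left (add_le_add_left (norm_add_le _ _) _) _) _) _) _) _) _) _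
        _ ≤ ‖(1/2 : ℂ) + (13/24 : ℂ) * y‖ + ‖(5/12 : ℂ) * y ^ 2‖ + ‖(47/192 : ℂ) * y ^ 3‖ + ‖(11/96 : ℂ) * y ^ 4‖ + ‖(151/3456 : ℂ) * y ^ 5‖ + ‖(47/3456 : ℂ) * y ^ 6‖ + ‖(143/41472 : ℂ) * y ^ 7‖ + ‖(29/41472 : ℂ) * y ^ 8‖ + ‖(1/9216 : ℂ) * y ^ 9‖ + ‖(1/82944 : ℂ) * y ^ 10‖ + ‖(1/1327104 : ℂ) * y ^ 11‖ := add_le_add_left (add_le_add_left (add_le_add_left (add_le_add_left (add_le_add_left (add_le_add_left (add_le_add_left (add_le_add_left (add_le_add_left (norm_add_le _ _) _) _) _) _) _) _) _) _) _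
        _ ≤ ‖(1/2 : ℂ)‖ + ‖(13/24 : ℂ) * y‖ + ‖(5/12 : ℂ) * y ^ 2‖ + ‖(47/192 : ℂ) * y ^ 3‖ + ‖(11/96 : ℂ) * y ^ 4‖ + ‖(151/3456 : ℂ) * y ^ 5‖ + ‖(47/3456 : ℂ) * y ^ 6‖ + ‖(143/41472 : ℂ) * y ^ 7‖ + ‖(29/41472 : ℂ) * y ^ 8‖ + ‖(1/9216 : ℂ) * y ^ 9‖ + ‖(1/82944 : ℂ) * y ^ 10‖ + ‖(1/1327104 : ℂ) * y ^ 11‖ := add_le_add_left (add_le_add_left (add_le_add_left (add_le_add_left (add_le_add_left (add_le_add_left (add_le_add_left (add_le_add_left (add_le_add_left (add_le_add_left (norm_add_le _ _) _) _) _) _) _) _) _) _) _) _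
    have step2 : ‖(1/2 : ℂ)‖ + ‖(13/24 : ℂ) * y‖ + ‖(5/12 : ℂ) * y ^ 2‖ + ‖(47/192 : ℂ) * y ^ 3‖ + ‖(11/96 : ℂ) * y ^ 4‖ + ‖(151/3456 : ℂ) * y ^ 5‖ + ‖(47/3456 : ℂ) * y ^ 6‖ + ‖(143/41472 : ℂ) * y ^ 7‖ + ‖(29/41472 : ℂ) * y ^ 8‖ + ‖(1/9216 : ℂ) * y ^ 9‖ + ‖(1/82944 : ℂ) * y ^ 10‖ + ‖(1/1327104 : ℂ) * y ^ 11‖ = (1/2 : ℝ) + (13/24 : ℝ) * ‖y‖ + (5/12 : ℝ) * ‖y‖ ^ 2 + (47/192 : ℝ) * ‖y‖ ^ 3 + (11/96 : ℝ) * ‖y‖ ^ 4 + (151/3456 : ℝ) * ‖y‖ ^ 5 + (47/3456 : ℝ) * ‖y‖ ^ 6 + (143/41472 : ℝ) * ‖y‖ ^ 7 + (29/41472 : ℝ) * ‖y‖ ^ 8 + (1/9216 : ℝ) * ‖y‖ ^ 9 + (1/82944 : ℝ) * ‖y‖ ^ 10 + (1/1327104 : ℝ) * ‖y‖ ^ 11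 := by
      simp [norm_mul, norm_pow]
    rw [step2] at step
    refine le_trans step ?_
    have hynn : (0:ℝ) ≤ ‖y‖ := norm_nonneg y
    linarith [hyk 2, hyk 3, hyk 4, hyk 5, hyk 6, hyk 7, hyk 8, hyk 9, hyk 10, hyk 11]
  have hfac2 : (v + v ^ 2 / 2 + v ^ 3 / 3 + v ^ 4 / 4) - ((lam:ℂ) * y + (lam:ℂ) * (1 + (lam:ℂ)) / 2 * y ^ 2 + (lam:ℂ) * (1 + (lam:ℂ)) * (1 + 2 * (lam:ℂ)) / 6 * y ^ 3 + (lam:ℂ) * (1 + (lam:ℂ)) * (1 + 6 * (lam:ℂ) + 6 * (lam:ℂ) ^ 2) / 24 * y ^ 4) = y ^ 5 * ((lam:ℂ) ^ 2 * ((1/8 : ℂ) + (5/144 : ℂ) * y + (1/144 : ℂ) * y ^ 2 + (1/1152 : ℂ) * y ^ 3) + (lam:ℂ) ^ 3 * ((5/12 : ℂ) + (1/4 : ℂ) * y + (1/9 : ℂ) * y ^ 2 + (11/288 : ℂ) * y ^ 3 + (53/5184 : ℂ) * y ^ 4 + (7/3456 : ℂ) * y ^ 5 + (1/3456 : ℂ)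 * y ^ 6 + (1/41472 : ℂ) * y ^ 7) + (lam:ℂ) ^ 4 * ((1/2 : ℂ) + (13/24 : ℂ) * y + (5/12 : ℂ) * y ^ 2 + (47/192 : ℂ) * y ^ 3 + (11/96 : ℂ) * y ^ 4 + (151/3456 : ℂ) * y ^ 5 + (47/3456 : ℂ) * y ^ 6 + (143/41472 : ℂ) * y ^ 7 + (29/41472 : ℂ) * y ^ 8 + (1/9216 : ℂ) * y ^ 9 + (1/82944 : ℂ) * y ^ 10 + (1/1327104 : ℂ) * y ^ 11)) := by
    rw [hv, hT]; ring
  have hGsum : ‖(lam:ℂ) ^ 2 * ((1/8 : ℂ) + (5/144 : ℂ) * y + (1/144 : ℂ) * y ^ 2 + (1/1152 : ℂ) * y ^ 3) + (lam:ℂ) ^ 3 * ((5/12 : ℂ) + (1/4 : ℂ) * y + (1/9 : ℂ) * y ^ 2 + (11/288 : ℂ) * y ^ 3 + (53/5184 : ℂ) * y ^ 4 + (7/3456 : ℂ) * y ^ 5 + (1/3456 : ℂ) * y ^ 6 + (1/41472 : ℂ) * y ^ 7) + (lam:ℂ) ^ 4 * ((1/2 : ℂ) + (13/24 : ℂ)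 * y + (5/12 : ℂ) * y ^ 2 + (47/192 : ℂ) * y ^ 3 + (11/96 : ℂ) * y ^ 4 + (151/3456 : ℂ) * y ^ 5 + (47/3456 : ℂ) * y ^ 6 + (143/41472 : ℂ) * y ^ 7 + (29/41472 : ℂ) * y ^ 8 + (1/9216 : ℂ) * y ^ 9 + (1/82944 : ℂ) * y ^ 10 + (1/1327104 : ℂ) * y ^ 11)‖ ≤ lam ^ 2 * 1 + lam ^ 3 * 1 + lam ^ 4 * 2 := by
    have hl2 : ‖(lam:ℂ) ^ 2‖ = lam ^ 2 := by rw [norm_pow, hc1]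
    have hl3 : ‖(lam:ℂ) ^ 3‖ = lam ^ 3 := by rw [norm_pow, hc1]
    have hl4 : ‖(lam:ℂ) ^ 4‖ = lam ^ 4 := by rw [norm_pow, hc1]
    calc ‖(lam:ℂ) ^ 2 * ((1/8 : ℂ) + (5/144 : ℂ) * y + (1/144 : ℂ) * y ^ 2 + (1/1152 : ℂ) * y ^ 3) + (lam:ℂ) ^ 3 * ((5/12 : ℂ) + (1/4 : ℂ) * y + (1/9 : ℂ) * y ^ 2 + (11/288 : ℂ) * y ^ 3 + (53/5184 : ℂ) * y ^ 4 + (7/3456 : ℂ) * y ^ 5 + (1/3456 : ℂ) * y ^ 6 + (1/41472 : ℂ) * y ^ 7) + (lam:ℂ) ^ 4 * ((1/2 : ℂ) + (13/24 : ℂ) * y + (5/12 : ℂ) * y ^ 2 + (47/192 : ℂ) * y ^ 3 + (11/96 : ℂ) * y ^ 4 + (151/3456 : ℂ) * y ^ 5 + (47/3456 : ℂ) * y ^ 6 + (143/41472 : ℂ) * y ^ 7 + (29/41472 : ℂ) * y ^ 8 + (1/9216 : ℂ) * y ^ 9 + (1/82944 : ℂ) * y ^ 10 + (1/1327104 : ℂ)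 * y ^ 11)‖
        ≤ ‖(lam:ℂ) ^ 2 * ((1/8 : ℂ) + (5/144 : ℂ) * y + (1/144 : ℂ) * y ^ 2 + (1/1152 : ℂ) * y ^ 3) + (lam:ℂ) ^ 3 * ((5/12 : ℂ) + (1/4 : ℂ) * y + (1/9 : ℂ) * y ^ 2 + (11/288 : ℂ) * y ^ 3 + (53/5184 : ℂ) * y ^ 4 + (7/3456 : ℂ) * y ^ 5 + (1/3456 : ℂ) * y ^ 6 + (1/41472 : ℂ) * y ^ 7)‖ + ‖(lam:ℂ) ^ 4 * ((1/2 : ℂ) + (13/24 : ℂ) * y + (5/12 : ℂ) * y ^ 2 + (47/192 : ℂ) * y ^ 3 + (11/96 : ℂ) * y ^ 4 + (151/3456 : ℂ) * y ^ 5 + (47/3456 : ℂ) * y ^ 6 + (143/41472 : ℂ) * y ^ 7 + (29/41472 : ℂ) * y ^ 8 + (1/9216 : ℂ) * y ^ 9 + (1/82944 : ℂ) * y ^ 10 + (1/1327104 : ℂ) * y ^ 11)‖ :=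
          norm_add_le _ _
      _ ≤ ‖(lam:ℂ) ^ 2 * ((1/8 : ℂ) + (5/144 : ℂ) * y + (1/144 : ℂ) * y ^ 2 + (1/1152 : ℂ) * y ^ 3)‖ + ‖(lam:ℂ) ^ 3 * ((5/12 : ℂ) + (1/4 : ℂ) * y + (1/9 : ℂ) * y ^ 2 + (11/288 : ℂ) * y ^ 3 + (53/5184 : ℂ) * y ^ 4 + (7/3456 : ℂ) * y ^ 5 + (1/3456 : ℂ) * y ^ 6 + (1/41472 : ℂ) * y ^ 7)‖ + ‖(lam:ℂ) ^ 4 * ((1/2 : ℂ) + (13/24 : ℂ) * y + (5/12 : ℂ) * y ^ 2 + (47/192 : ℂ) * y ^ 3 + (11/96 : ℂ) * y ^ 4 + (151/3456 : ℂ) * y ^ 5 + (47/3456 : ℂ) * y ^ 6 + (143/41472 : ℂ) * y ^ 7 + (29/41472 : ℂ) * y ^ 8 + (1/9216 : ℂ) * y ^ 9 + (1/82944 : ℂ) * y ^ 10 + (1/1327104 : ℂ) * y ^ 11)‖ :=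
          add_le_add_left (norm_add_le _ _) _
      _ = lam ^ 2 * ‖((1/8 : ℂ) + (5/144 : ℂ) * y + (1/144 : ℂ) * y ^ 2 + (1/1152 : ℂ) * y ^ 3)‖ + lam ^ 3 * ‖((5/12 : ℂ) + (1/4 : ℂ) * y + (1/9 : ℂ) * y ^ 2 + (11/288 : ℂ) * y ^ 3 + (53/5184 : ℂ) * y ^ 4 + (7/3456 : ℂ) * y ^ 5 + (1/3456 : ℂ) * y ^ 6 + (1/41472 : ℂ) * y ^ 7)‖ + lam ^ 4 * ‖((1/2 : ℂ) + (13/24 : ℂ) * y + (5/12 : ℂ) * y ^ 2 + (47/192 : ℂ) * y ^ 3 + (11/96 : ℂ) * y ^ 4 + (151/3456 : ℂ) * y ^ 5 + (47/3456 : ℂ) * y ^ 6 + (143/41472 : ℂ) * y ^ 7 + (29/41472 : ℂ) * y ^ 8 + (1/9216 : ℂ) * y ^ 9 + (1/82944 : ℂ) * y ^ 10 + (1/1327104 : ℂ) * y ^ 11)‖ := by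
          rw [norm_mul, norm_mul, norm_mul, hl2, hl3, hl4]
      _ ≤ lam ^ 2 * 1 + lam ^ 3 * 1 + lam ^ 4 * 2 :=
          add_le_add (add_le_add (mul_le_mul_of_nonneg_left hg2 (pow_nonneg hl.le 2))
            (mul_le_mul_of_nonneg_left hg3 (pow_nonneg hl.le 3)))
            (mul_le_mul_of_nonneg_left hg4 (pow_nonneg hl.le 4))
  rw [hPy, hz1]
  have hiden : -Complex.log (1 + -u) - ((lam:ℂ) * y + (lam:ℂ) * (1 + (lam:ℂ)) / 2 * y ^ 2 + (lam:ℂ) * (1 + (lam:ℂ)) * (1 + 2 * (lam:ℂ)) / 6 * y ^ 3 + (lam:ℂ) * (1 + (lam:ℂ)) * (1 + 6 * (lam:ℂ) + 6 * (lam:ℂ) ^ 2) / 24 * y ^ 4)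
      = -(Complex.log (1 + -u) - Complex.logTaylor 5 (-u))
        + ((u + u ^ 2 / 2 + u ^ 3 / 3 + u ^ 4 / 4) - (v + v ^ 2 / 2 + v ^ 3 / 3 + v ^ 4 / 4))
        + y ^ 5 * ((lam:ℂ) ^ 2 * ((1/8 : ℂ) + (5/144 : ℂ) * y + (1/144 : ℂ) * y ^ 2 + (1/1152 : ℂ) * y ^ 3) + (lam:ℂ) ^ 3 * ((5/12 : ℂ) + (1/4 : ℂ) * y + (1/9 : ℂ) * y ^ 2 + (11/288 : ℂ) * y ^ 3 + (53/5184 : ℂ) * y ^ 4 + (7/3456 : ℂ) * y ^ 5 + (1/3456 : ℂ) * y ^ 6 + (1/41472 : ℂ) * y ^ 7) + (lam:ℂ) ^ 4 * ((1/2 : ℂ) + (13/24 : ℂ) * y + (5/12 : ℂ) * y ^ 2 + (47/192 : ℂ) * y ^ 3 + (11/96 : ℂ) * y ^ 4 + (151/3456 : ℂ) * y ^ 5 + (47/3456 : ℂ) * y ^ 6 + (143/41472 : ℂ) * y ^ 7 + (29/41472 : ℂ) * y ^ 8 + (1/9216 : ℂ) * y ^ 9 + (1/82944 : ℂ) * y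 ^ 10 + (1/1327104 : ℂ) * y ^ 11)) := by
    rw [hLT]
    linear_combination hfac2
  rw [hiden]
  have htri : ‖-(Complex.log (1 + -u) - Complex.logTaylor 5 (-u))
        + ((u + u ^ 2 / 2 + u ^ 3 / 3 + u ^ 4 / 4) - (v + v ^ 2 / 2 + v ^ 3 / 3 + v ^ 4 / 4))
        + y ^ 5 * ((lam:ℂ) ^ 2 * ((1/8 : ℂ) + (5/144 : ℂ) * y + (1/144 : ℂ) * y ^ 2 + (1/1152 : ℂ) * y ^ 3) + (lam:ℂ) ^ 3 * ((5/12 : ℂ) + (1/4 : ℂ) * y + (1/9 : ℂ) * y ^ 2 + (11/288 : ℂ) * y ^ 3 + (53/5184 : ℂ) * y ^ 4 + (7/3456 : ℂ) * y ^ 5 + (1/3456 : ℂ) * y ^ 6 + (1/41472 : ℂ) * y ^ 7) + (lam:ℂ) ^ 4 * ((1/2 : ℂ) + (13/24 : ℂ) * y + (5/12 : ℂ) * y ^ 2 + (47/192 : ℂ) * y ^ 3 + (11/96 : ℂ) * y ^ 4 + (151/3456 : ℂ) * y ^ 5 + (47/3456 : ℂ) * y ^ 6 + (143/41472 : ℂ)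 * y ^ 7 + (29/41472 : ℂ) * y ^ 8 + (1/9216 : ℂ) * y ^ 9 + (1/82944 : ℂ) * y ^ 10 + (1/1327104 : ℂ) * y ^ 11))‖
      ≤ ‖Complex.log (1 + -u) - Complex.logTaylor 5 (-u)‖
        + ‖(u + u ^ 2 / 2 + u ^ 3 / 3 + u ^ 4 / 4) - (v + v ^ 2 / 2 + v ^ 3 / 3 + v ^ 4 / 4)‖
        + |X| ^ 5 * ‖(lam:ℂ) ^ 2 * ((1/8 : ℂ) + (5/144 : ℂ) * y + (1/144 : ℂ) * y ^ 2 + (1/1152 : ℂ) * y ^ 3) + (lam:ℂ) ^ 3 * ((5/12 : ℂ) + (1/4 : ℂ) * y + (1/9 : ℂ) * y ^ 2 + (11/288 : ℂ) * y ^ 3 + (53/5184 : ℂ) * y ^ 4 + (7/3456 : ℂ) * y ^ 5 + (1/3456 : ℂ) * y ^ 6 + (1/41472 : ℂ) * y ^ 7) + (lam:ℂ) ^ 4 * ((1/2 : ℂ) + (13/24 : ℂ) * y + (5/12 : ℂ) * y ^ 2 + (47/192 : ℂ) * y ^ 3 + (11/96 : ℂ) * y ^ 4 + (151/3456 : ℂ)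 * y ^ 5 + (47/3456 : ℂ) * y ^ 6 + (143/41472 : ℂ) * y ^ 7 + (29/41472 : ℂ) * y ^ 8 + (1/9216 : ℂ) * y ^ 9 + (1/82944 : ℂ) * y ^ 10 + (1/1327104 : ℂ) * y ^ 11)‖ := by
    calc ‖-(Complex.log (1 + -u) - Complex.logTaylor 5 (-u))
        + ((u + u ^ 2 / 2 + u ^ 3 / 3 + u ^ 4 / 4) - (v + v ^ 2 / 2 + v ^ 3 / 3 + v ^ 4 / 4))
        + y ^ 5 * ((lam:ℂ) ^ 2 * ((1/8 : ℂ) + (5/144 : ℂ) * y + (1/144 : ℂ) * y ^ 2 + (1/1152 : ℂ) * y ^ 3) + (lam:ℂ) ^ 3 * ((5/12 : ℂ) + (1/4 : ℂ) * y + (1/9 : ℂ) * y ^ 2 + (11/288 : ℂ) * y ^ 3 + (53/5184 : ℂ) * y ^ 4 + (7/3456 : ℂ) * y ^ 5 + (1/3456 : ℂ) * y ^ 6 + (1/41472 : ℂ) * y ^ 7) + (lam:ℂ) ^ 4 * ((1/2 : ℂ) + (13/24 : ℂ) * y + (5/12 : ℂ) * y ^ 2 + (47/192 : ℂ) * y ^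 3 + (11/96 : ℂ) * y ^ 4 + (151/3456 : ℂ) * y ^ 5 + (47/3456 : ℂ) * y ^ 6 + (143/41472 : ℂ) * y ^ 7 + (29/41472 : ℂ) * y ^ 8 + (1/9216 : ℂ) * y ^ 9 + (1/82944 : ℂ) * y ^ 10 + (1/1327104 : ℂ) * y ^ 11))‖
        ≤ ‖-(Complex.log (1 + -u) - Complex.logTaylor 5 (-u))
          + ((u + u ^ 2 / 2 + u ^ 3 / 3 + u ^ 4 / 4) - (v + v ^ 2 / 2 + v ^ 3 / 3 + v ^ 4 / 4))‖
          + ‖y ^ 5 * ((lam:ℂ) ^ 2 * ((1/8 : ℂ) + (5/144 : ℂ) * y + (1/144 : ℂ) * y ^ 2 + (1/1152 : ℂ) * y ^ 3) + (lam:ℂ) ^ 3 * ((5/12 : ℂ) + (1/4 : ℂ) * y + (1/9 : ℂ) * y ^ 2 + (11/288 : ℂ) * y ^ 3 + (53/5184 : ℂ) * y ^ 4 + (7/3456 : ℂ) * y ^ 5 + (1/3456 : ℂ) * y ^ 6 + (1/41472 : ℂ) * y ^ 7) + (lam:ℂ) ^ 4 * ((1/2 : ℂ) + (13/24 : ℂ)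 * y + (5/12 : ℂ) * y ^ 2 + (47/192 : ℂ) * y ^ 3 + (11/96 : ℂ) * y ^ 4 + (151/3456 : ℂ) * y ^ 5 + (47/3456 : ℂ) * y ^ 6 + (143/41472 : ℂ) * y ^ 7 + (29/41472 : ℂ) * y ^ 8 + (1/9216 : ℂ) * y ^ 9 + (1/82944 : ℂ) * y ^ 10 + (1/1327104 : ℂ) * y ^ 11))‖ := norm_add_le _ _
      _ ≤ ‖-(Complex.log (1 + -u) - Complex.logTaylor 5 (-u))‖
          + ‖(u + u ^ 2 / 2 + u ^ 3 / 3 + u ^ 4 / 4) - (v + v ^ 2 / 2 + v ^ 3 / 3 + v ^ 4 / 4)‖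
          + ‖y ^ 5 * ((lam:ℂ) ^ 2 * ((1/8 : ℂ) + (5/144 : ℂ) * y + (1/144 : ℂ) * y ^ 2 + (1/1152 : ℂ) * y ^ 3) + (lam:ℂ) ^ 3 * ((5/12 : ℂ) + (1/4 : ℂ) * y + (1/9 : ℂ) * y ^ 2 + (11/288 : ℂ) * y ^ 3 + (53/5184 : ℂ) * y ^ 4 + (7/3456 : ℂ) * y ^ 5 + (1/3456 : ℂ) * y ^ 6 + (1/41472 : ℂ) * y ^ 7) + (lam:ℂ) ^ 4 * ((1/2 : ℂ) + (13/24 : ℂ) * y + (5/12 : ℂ) * y ^ 2 + (47/192 : ℂ) * y ^ 3 + (11/96 : ℂ) * y ^ 4 + (151/3456 : ℂ) * y ^ 5 + (47/3456 : ℂ) * y ^ 6 + (143/41472 : ℂ) * y ^ 7 + (29/41472 : ℂ) * y ^ 8 + (1/9216 : ℂ) * y ^ 9 + (1/82944 : ℂ) * y ^ 10 + (1/1327104 : ℂ) * y ^ 11))‖ := add_le_add_left (norm_add_le _ _) _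
      _ = ‖Complex.log (1 + -u) - Complex.logTaylor 5 (-u)‖
          + ‖(u + u ^ 2 / 2 + u ^ 3 / 3 + u ^ 4 / 4) - (v + v ^ 2 / 2 + v ^ 3 / 3 + v ^ 4 / 4)‖
          + |X| ^ 5 * ‖(lam:ℂ) ^ 2 * ((1/8 : ℂ) + (5/144 : ℂ) * y + (1/144 : ℂ) * y ^ 2 + (1/1152 : ℂ) * y ^ 3) + (lam:ℂ) ^ 3 * ((5/12 : ℂ) + (1/4 : ℂ) * y + (1/9 : ℂ) * y ^ 2 + (11/288 : ℂ) * y ^ 3 + (53/5184 : ℂ) * y ^ 4 + (7/3456 : ℂ) * y ^ 5 + (1/3456 : ℂ) * y ^ 6 + (1/41472 : ℂ) * y ^ 7) + (lam:ℂ) ^ 4 * ((1/2 : ℂ) + (13/24 : ℂ) * y + (5/12 : ℂ) * y ^ 2 + (47/192 : ℂ) * y ^ 3 + (11/96 : ℂ) * y ^ 4 + (151/3456 : ℂ) * y ^ 5 + (47/3456 : ℂ) * y ^ 6 + (143/41472 : ℂ) * y ^ 7 + (29/41472 : ℂ) * y ^ 8 + (1/9216 : ℂ) * y ^ 9 + (1/82944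 : ℂ) * y ^ 10 + (1/1327104 : ℂ) * y ^ 11)‖ := by
          rw [norm_neg, norm_mul, norm_pow, hny]
  have hX5 : (0:ℝ) ≤ |X| ^ 5 := pow_nonneg hA 5
  have q1 : lam ^ 1 * |X| ^ 5 ≤ (lam + lam ^ 5) * |X| ^ 5 :=
    mul_le_mul_of_nonneg_right (aux_pow_le hl (by norm_num) (by norm_num)) hX5
  have q2 : lam ^ 2 * |X| ^ 5 ≤ (lam + lam ^ 5) * |X| ^ 5 :=
    mul_le_mul_of_nonneg_right (aux_pow_le hl (by norm_num) (by norm_num)) hX5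
  have q3 : lam ^ 3 * |X| ^ 5 ≤ (lam + lam ^ 5) * |X| ^ 5 :=
    mul_le_mul_of_nonneg_right (aux_pow_le hl (by norm_num) (by norm_num)) hX5
  have q4 : lam ^ 4 * |X| ^ 5 ≤ (lam + lam ^ 5) * |X| ^ 5 :=
    mul_le_mul_of_nonneg_right (aux_pow_le hl (by norm_num) (by norm_num)) hX5
  have q5 : lam ^ 5 * |X| ^ 5 ≤ (lam + lam ^ 5) * |X| ^ 5 :=
    mul_le_mul_of_nonneg_right (aux_pow_le hl (by norm_num) (by norm_num)) hX5
  have hGs : |X| ^ 5 * ‖(lam:ℂ) ^ 2 * ((1/8 : ℂ) + (5/144 : ℂ) * y + (1/144 : ℂ) * y ^ 2 + (1/1152 : ℂ) * y ^ 3) + (lam:ℂ) ^ 3 * ((5/12 : ℂ) + (1/4 : ℂ) * y + (1/9 : ℂ) * y ^ 2 + (11/288 : ℂ) * y ^ 3 + (53/5184 : ℂ) * y ^ 4 + (7/3456 : ℂ) * y ^ 5 + (1/3456 : ℂ) * y ^ 6 + (1/41472 : ℂ) * y ^ 7) + (lam:ℂ) ^ 4 * ((1/2 : ℂ) + (13/24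 : ℂ) * y + (5/12 : ℂ) * y ^ 2 + (47/192 : ℂ) * y ^ 3 + (11/96 : ℂ) * y ^ 4 + (151/3456 : ℂ) * y ^ 5 + (47/3456 : ℂ) * y ^ 6 + (143/41472 : ℂ) * y ^ 7 + (29/41472 : ℂ) * y ^ 8 + (1/9216 : ℂ) * y ^ 9 + (1/82944 : ℂ) * y ^ 10 + (1/1327104 : ℂ) * y ^ 11)‖ ≤ |X| ^ 5 * (lam ^ 2 * 1 + lam ^ 3 * 1 + lam ^ 4 * 2) :=
    mul_le_mul_of_nonneg_left hGsum hX5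
  have hgoal : 10000 * (lam + lam ^ 5) * |X| ^ 5 = 10000 * ((lam + lam ^ 5) * |X| ^ 5) := by
    ring
  rw [hgoal]
  have e1 : |X| ^ 5 * (lam ^ 2 * 1 + lam ^ 3 * 1 + lam ^ 4 * 2)
      = lam ^ 2 * |X| ^ 5 + lam ^ 3 * |X| ^ 5 + 2 * (lam ^ 4 * |X| ^ 5) := by ring
  rw [e1] at hGs
  have e2 : lam * |X| ^ 5 / 50 = 1/50 * (lam ^ 1 * |X| ^ 5) := by ring
  rw [e2] at hT2
  linarith

theorem stmt_9 :
    ∃ C : ℝ, 0 < C ∧ ∀ lam : ℝ, 0 < lam → ∀ X : ℝ,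
      ∃ η : ℂ, ‖η‖ ≤ C * (lam + lam ^ 5) * |X| ^ 5 ∧
        (1 - (lam : ℂ) * (Complex.exp (Complex.I * X) - 1))⁻¹ =
          Complex.exp (Complex.I * lam * X
            - (1 / 2 : ℂ) * lam * (1 + lam) * X ^ 2
            - (Complex.I / 6) * lam * (1 + lam) * (1 + 2 * lam) * X ^ 3
            + (1 / 24 : ℂ) * lam * (1 + lam) * (1 + 6 * lam + 6 * lam ^ 2) * X ^ 4
            + η) := by
  refine ⟨10000, by norm_num, ?_⟩
  intro lam hl X
  set Pc : ℂ := Complex.I * lam * X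
            - (1 / 2 : ℂ) * lam * (1 + lam) * X ^ 2
            - (Complex.I / 6) * lam * (1 + lam) * (1 + 2 * lam) * X ^ 3
            + (1 / 24 : ℂ) * lam * (1 + lam) * (1 + 6 * lam + 6 * lam ^ 2) * X ^ 4 with hPc
  set l : ℂ := (lam : ℂ) with hldef
  set y : ℂ := Complex.I * (X : ℂ) with hy
  set w : ℂ := Complex.exp y - 1 with hw
  set z : ℂ := 1 - l * w with hz
  have hA : (0:ℝ) ≤ |X| := abs_nonneg X
  have hny : ‖y‖ = |X| := by
    rw [hy]
    simp [map_mul]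
  have hc1 : ‖l‖ = lam := by
    rw [hldef, Complex.norm_real, Real.norm_eq_abs, abs_of_pos hl]
  have hw_le : ‖w‖ ≤ |X| := by
    rw [hw, hy]; exact aux_exp_sub_one X
  have hzre : 1 ≤ z.re := by
    rw [hz, hw, hy]
    have h0 : Complex.I * (X:ℂ) = (X:ℂ) * Complex.I := by ring
    rw [h0, hldef]
    simp [Complex.sub_re, Complex.mul_re, Complex.exp_ofReal_mul_I_re,
      Complex.exp_ofReal_mul_I_im, Complex.ofReal_re, Complex.ofReal_im]
    nlinarith [Real.cos_le_one X]
  have hz0 : z ≠ 0 := by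
    intro h
    rw [h] at hzre
    simp at hzre
    linarith
  have hPy : Pc = l * y + l * (1 + l) / 2 * y ^ 2 + l * (1 + l) * (1 + 2 * l) / 6 * y ^ 3
      + l * (1 + l) * (1 + 6 * l + 6 * l ^ 2) / 24 * y ^ 4 := by
    rw [hPc, hy]
    linear_combination ((-1/2)*l*(X:ℂ)^2 + (1/24)*l*(X:ℂ)^4 - (1/6)*l*Complex.I*(X:ℂ)^3
      - (1/24)*l*Complex.I^2*(X:ℂ)^4 - (1/2)*l^2*(X:ℂ)^2 + (7/24)*l^2*(X:ℂ)^4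
      - (1/2)*l^2*Complex.I*(X:ℂ)^3 - (7/24)*l^2*Complex.I^2*(X:ℂ)^4 + (1/2)*l^3*(X:ℂ)^4
      - (1/3)*l^3*Complex.I*(X:ℂ)^3 - (1/2)*l^3*Complex.I^2*(X:ℂ)^4 + (1/4)*l^4*(X:ℂ)^4
      - (1/4)*l^4*Complex.I^2*(X:ℂ)^4) * Complex.I_sq
  rw [hldef] at hPy
  refine ⟨-Complex.log z - Pc, ?_, ?_⟩
  · by_cases hreg : lam * |X| ≤ 1/4 ∧ |X| ≤ 1/2
    · obtain ⟨hr1, hr2⟩ := hreg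
      rw [hz, hldef]
      exact aux_hard lam hl X y w Pc hw hny hw_le hPy hr1 hr2
    · have hdisj : 1/4 < lam * |X| ∨ 1/2 < |X| := by
        rcases not_and_or.mp hreg with h | h
        · exact Or.inl (not_le.mp h)
        · exact Or.inr (not_le.mp h)
      have hzim : |z.im| ≤ lam * |X| := by
        have e : z.im = -(lam * w.im) := by
          rw [hz, hldef]
          simp [Complex.sub_im, Complex.mul_im, Complex.ofReal_re, Complex.ofReal_im]
        rw [e, abs_neg, abs_mul, abs_of_pos hl]
        have h1 : |w.im| ≤ ‖w‖ := by
          exact Complex.abs_im_le_norm w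
        exact mul_le_mul_of_nonneg_left (le_trans h1 hw_le) hl.le
      have habs2 : ‖z‖ ≤ 1 + lam * |X| := by
        rw [hz]
        calc ‖1 - l * w‖ ≤ ‖(1:ℂ)‖ + ‖l * w‖ := norm_sub_le _ _
          _ = 1 + lam * ‖w‖ := by rw [norm_one, norm_mul, hc1]
          _ ≤ 1 + lam * |X| := by
              exact add_le_add_right (mul_le_mul_of_nonneg_left hw_le hl.le) 1
      have hlog : ‖Complex.log z‖ ≤ 3 * (lam * |X|) := aux_log lam hl X z hzre hzim habs2
      exact aux_easy lam hl X y Pc (Complex.log z) hny hPy hlog hdisj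
  · rw [show Pc + (-Complex.log z - Pc) = -Complex.log z by ring,
      Complex.exp_neg, Complex.exp_log hz0]
end

section
/- Let λ > 0 and A₂ = λ(1+λ)/2. For every real z with |z| ≤ (1/10)(1+λ)^{−1}, we have 0 ≤ (1 + 4A₂(1 − cos z))^{−1/2} ≤ exp(−A₂z² + (A₂/12 + A₂²)z⁴). -/
open Real

lemma aux_sin_lb : ∀ x : ℝ, 0 ≤ x → x - x ^ 3 / 6 ≤ Real.sin x := by
  intro x hx
  have key : MonotoneOn (fun x : ℝ => Real.sin x - x + x ^ 3 / 6) (Set.Ici 0) := by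
    have hderiv : ∀ y : ℝ, HasDerivAt (fun x : ℝ => Real.sin x - x + x ^ 3 / 6)
        (Real.cos y - 1 + y ^ 2 / 2) y := by
      intro y
      have h := ((Real.hasDerivAt_sin y).sub (hasDerivAt_id y)).add
        ((hasDerivAt_pow 3 y).div_const 6)
      refine h.congr_deriv ?_
      ring
    apply monotoneOn_of_deriv_nonneg (convex_Ici 0)
    · exact (Continuous.continuousOn (by continuity))
    · intro y _
      exact (hderiv y).differentiableAt.differentiableWithinAt
    · intro y _
      rw [(hderiv y).deriv]
      nlinarith [Real.one_sub_sq_div_two_le_cos (x := y)]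
  have h0 : (fun x : ℝ => Real.sin x - x + x ^ 3 / 6) 0 ≤
      (fun x : ℝ => Real.sin x - x + x ^ 3 / 6) x :=
    key (Set.self_mem_Ici) (Set.mem_Ici.2 hx) hx
  simp at h0
  linarith

lemma aux_cos_ub : ∀ x : ℝ, Real.cos x ≤ 1 - x ^ 2 / 2 + x ^ 4 / 24 := by
  have main : ∀ x : ℝ, 0 ≤ x → Real.cos x ≤ 1 - x ^ 2 / 2 + x ^ 4 / 24 := by
    intro x hx
    have key : MonotoneOn (fun x : ℝ => 1 - x ^ 2 / 2 + x ^ 4 / 24 - Real.cos x)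
        (Set.Ici 0) := by
      have hderiv : ∀ y : ℝ, HasDerivAt
          (fun x : ℝ => 1 - x ^ 2 / 2 + x ^ 4 / 24 - Real.cos x)
          (-(y) + y ^ 3 / 6 + Real.sin y) y := by
        intro y
        have h := ((((hasDerivAt_const y (1:ℝ)).sub ((hasDerivAt_pow 2 y).div_const 2)).add
          ((hasDerivAt_pow 4 y).div_const 24)).sub (Real.hasDerivAt_cos y))
        refine h.congr_deriv ?_
        push_cast
        ring
      apply monotoneOn_of_deriv_nonneg (convex_Ici 0)
      · exact (Continuous.continuousOn (by continuity))
      · intro y _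
        exact (hderiv y).differentiableAt.differentiableWithinAt
      · intro y hy
        rw [(hderiv y).deriv]
        have := aux_sin_lb y (le_of_lt (by simpa using hy))
        linarith
    have h0 := key (Set.self_mem_Ici) (Set.mem_Ici.2 hx) hx
    simp at h0
    linarith
  intro x
  rcases le_total 0 x with h | h
  · exact main x h
  · have h1 := main (-x) (by linarith)
    have h2 : (-x) ^ 2 = x ^ 2 := by ring
    have h3 : (-x) ^ 4 = x ^ 4 := by ring
    rw [Real.cos_neg, h2, h3] at h1
    exact h1

lemma aux_poly (A s u : ℝ) (hA : 0 < A) (hs0 : 0 ≤ s) (hs : s ≤ 1/100)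
    (hAs : A * s ≤ 1/200) (hu : u = 2*A*s - (A/6 + 2*A^2)*s^2) (hu0 : 0 ≤ u)
    (hu_ub : u ≤ 2*A*s) :
    u + u^2/2 + u^3*(2/9) ≤ 2*A*s - A*s^2/6 := by
  have hcube : u^3 ≤ 8*A^3*s^3 := by
    calc u^3 ≤ (2*A*s)^3 := pow_le_pow_left₀ hu0 hu_ub 3
    _ = 8*A^3*s^3 := by ring
  have h1 : A^2*s^4 ≤ A^2*s^3*(1/100) := by
    have h0 : 0 ≤ A^2*s^3 := by positivity
    nlinarith
  have h2 : A^3*s^4 ≤ A^3*s^3*(1/100) := by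
    have h0 : 0 ≤ A^3*s^3 := by positivity
    nlinarith
  have h3 : A^4*s^4 ≤ A^3*s^3*(1/200) := by
    have h0 : 0 ≤ A^3*s^3 := by positivity
    nlinarith
  have hA2s3 : (0:ℝ) ≤ A^2*s^3 := by positivity
  have hA3s3 : (0:ℝ) ≤ A^3*s^3 := by positivity
  have key : (2*A*s - (A/6 + 2*A^2)*s^2) + (2*A*s - (A/6 + 2*A^2)*s^2)^2/2
      + (8*A^3*s^3)*(2/9) ≤ 2*A*s - A*s^2/6 := by nlinarith [h1, h2, h3, hA2s3, hA3s3]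
  have hsq : u^2 = (2*A*s - (A/6 + 2*A^2)*s^2)^2 := by rw [hu]
  rw [hu] at *
  nlinarith [key, hcube]

theorem stmt_11 (lam : ℝ) (hlam : 0 < lam) (A₂ : ℝ) (hA₂ : A₂ = lam * (1 + lam) / 2)
    (z : ℝ) (hz : |z| ≤ (1 / 10) * (1 + lam)⁻¹) :
    0 ≤ (1 + 4 * A₂ * (1 - Real.cos z)) ^ (-(1 / 2) : ℝ) ∧
    (1 + 4 * A₂ * (1 - Real.cos z)) ^ (-(1 / 2) : ℝ)
      ≤ Real.exp (-A₂ * z ^ 2 + (A₂ / 12 + A₂ ^ 2) * z ^ 4) := by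
  have hlam1 : (0:ℝ) < 1 + lam := by linarith
  have hA : 0 < A₂ := by rw [hA₂]; positivity
  have hcos1 : Real.cos z ≤ 1 := Real.cos_le_one z
  have hbase : (0:ℝ) < 1 + 4 * A₂ * (1 - Real.cos z) := by nlinarith
  refine ⟨Real.rpow_nonneg hbase.le _, ?_⟩
  have hs0 : (0:ℝ) ≤ z ^ 2 := sq_nonneg z
  have hz2 : z ^ 2 ≤ (1/100) * ((1 + lam)⁻¹) ^ 2 := by
    have := sq_le_sq' (neg_le_of_abs_le hz) (le_of_abs_le hz)
    calc z ^ 2 ≤ ((1/10) * (1+lam)⁻¹) ^ 2 := this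
    _ = (1/100) * ((1+lam)⁻¹)^2 := by ring
  have hinv1 : (1 + lam)⁻¹ ≤ 1 := by
    rw [inv_le_one_iff₀]; right; linarith
  have hinv0 : (0:ℝ) < (1 + lam)⁻¹ := inv_pos.2 hlam1
  have hs_small : z ^ 2 ≤ 1/100 := by nlinarith
  have hAs : A₂ * z ^ 2 ≤ 1/200 := by
    have h1 : A₂ * z ^ 2 ≤ (lam * (1+lam)/2) * ((1/100) * ((1+lam)⁻¹)^2) := by
      rw [hA₂]
      apply mul_le_mul_of_nonneg_left hz2 (by positivity)
    have h2 : (lam * (1+lam)/2) * ((1/100) * ((1+lam)⁻¹)^2)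
        = (lam * (1+lam)⁻¹) / 200 := by
      field_simp
      ring
    have h3 : lam * (1+lam)⁻¹ ≤ 1 := by
      rw [mul_inv_le_iff₀ hlam1]; linarith
    calc A₂ * z ^ 2 ≤ (lam * (1+lam)⁻¹) / 200 := by rw [← h2]; exact h1
    _ ≤ 1/200 := by linarith
  -- u = 2t
  have h5 : A₂ * z ^ 2 ≤ A₂ * (1/100) := mul_le_mul_of_nonneg_left hs_small hA.le
  have h6 : A₂ * (A₂ * z ^ 2) ≤ A₂ * (1/200) := mul_le_mul_of_nonneg_left hAs hA.le
  have h4 : (A₂/6 + 2*A₂^2) * z ^ 2 ≤ 2*A₂ := by nlinarith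
  set u : ℝ := 2*A₂*z^2 - (A₂/6 + 2*A₂^2)*(z^2)^2 with hu_def
  have hu0 : 0 ≤ u := by
    have := mul_nonneg hs0 (sub_nonneg.2 h4)
    rw [hu_def]; nlinarith
  have hu_ub : u ≤ 2*A₂*z^2 := by
    have : (0:ℝ) ≤ (A₂/6 + 2*A₂^2)*(z^2)^2 := by positivity
    rw [hu_def]; linarith
  have hu1 : |u| ≤ 1 := by
    rw [abs_of_nonneg hu0]; linarith
  -- exp bound with n = 3
  have hexp := Real.exp_bound hu1 (n := 3) (by norm_num)
  norm_num [Finset.sum_range_succ, Nat.factorial] at hexp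
  have hexp2 : Real.exp u ≤ 1 + u + u ^ 2 / 2 + u ^ 3 * (2/9) := by
    have h := (abs_sub_le_iff.1 hexp).1
    have habs : |u| ^ 3 = u ^ 3 := by rw [abs_of_nonneg hu0]
    rw [habs] at h
    linarith
  -- lower bound on 4A(1-cos z)
  have hcos : Real.cos z ≤ 1 - z ^ 2 / 2 + z ^ 4 / 24 := aux_cos_ub z
  have hx_lb : 2*A₂*z^2 - A₂*(z^2)^2/6 ≤ 4 * A₂ * (1 - Real.cos z) := by nlinarith
  -- polynomial step
  have hpoly := aux_poly A₂ (z^2) u hA hs0 hs_small hAs hu_def hu0 hu_ub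
  have hkey : Real.exp u ≤ 1 + 4 * A₂ * (1 - Real.cos z) := by linarith
  have hmain : (1 + 4 * A₂ * (1 - Real.cos z)) ^ (-(1 / 2) : ℝ)
      ≤ (Real.exp u) ^ (-(1 / 2) : ℝ) :=
    Real.rpow_le_rpow_of_nonpos (Real.exp_pos u) hkey (by norm_num)
  have heq : (Real.exp u) ^ (-(1 / 2) : ℝ)
      = Real.exp (-A₂ * z ^ 2 + (A₂ / 12 + A₂ ^ 2) * z ^ 4) := by
    rw [← Real.exp_mul]
    congr 1
    rw [hu_def]
    ring
  rw [heq] at hmain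
  exact hmain
end

section
/- There is an absolute constant C > 0 such that for every λ > 0 and every real K ≥ 1, setting A₂ = λ(1+λ)/2, t = (1/60)(1+λ)^{−1}, and g(x) = −A₂x² + (3A₂/4 + 9A₂²)x⁴, we have ∫_{−2t}^{2t} exp(K·g(x)) dx ≤ √(π/(A₂K)) · exp(C·(K^{−1} + (A₂K)^{−1})). -/
open MeasureTheory Real Set

lemma gamma_five_half : Real.Gamma (5/2) = 3/4 * Real.sqrt Real.pi := by
  have h32 : Real.Gamma (3/2) = 1/2 * Real.sqrt Real.pi := by
    rw [show (3/2:ℝ) = 1/2 + 1 by norm_num, Real.Gamma_add_one (by norm_num),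
      Real.Gamma_one_half_eq]
  rw [show (5/2:ℝ) = 3/2 + 1 by norm_num, Real.Gamma_add_one (by norm_num), h32]
  ring

lemma gauss4 {c : ℝ} (hc : 0 < c) :
    ∫ x : ℝ, x ^ 4 * Real.exp (-c * x ^ 2) = 3 / (4 * c ^ 2) * Real.sqrt (Real.pi / c) := by
  have h1 : ∫ x : ℝ, x ^ 4 * Real.exp (-c * x ^ 2)
      = 2 * ∫ x in Ioi (0:ℝ), x ^ 4 * Real.exp (-c * x ^ 2) := by
    rw [← integral_comp_abs (f := fun x => x ^ 4 * Real.exp (-c * x ^ 2))]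
    congr 1
    ext x
    rw [(by decide : Even 4).pow_abs, sq_abs]
  have h2 : ∫ x in Ioi (0:ℝ), x ^ 4 * Real.exp (-c * x ^ 2)
      = c ^ (-(4+1)/2 : ℝ) * (1/2) * Real.Gamma ((4+1)/2) := by
    rw [← integral_rpow_mul_exp_neg_mul_rpow (by norm_num : (0:ℝ) < 2)
      (by norm_num : (-1:ℝ) < 4) hc]
    refine setIntegral_congr_fun measurableSet_Ioi (fun x hx => ?_)
    rw [show (4:ℝ) = ((4:ℕ):ℝ) by norm_num, show (2:ℝ) = ((2:ℕ):ℝ) by norm_num,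
      Real.rpow_natCast, Real.rpow_natCast]
  rw [h1, h2, show ((4:ℝ)+1)/2 = 5/2 by norm_num, gamma_five_half]
  have hc5 : c ^ (-(4+1)/2 : ℝ) = (c^2 * Real.sqrt c)⁻¹ := by
    rw [show (-(4+1)/2 : ℝ) = -(5/2) by norm_num, Real.rpow_neg hc.le]
    congr 1
    rw [show (5/2:ℝ) = 2 + 1/2 by norm_num, Real.rpow_add hc,
      Real.sqrt_eq_rpow]
    norm_num
  have hsc : Real.sqrt c ≠ 0 := ne_of_gt (Real.sqrt_pos.mpr hc)
  rw [hc5, Real.sqrt_div Real.pi_nonneg]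
  field_simp

set_option maxHeartbeats 1000000 in
theorem stmt_12 :
    ∃ C : ℝ, 0 < C ∧ ∀ lam : ℝ, 0 < lam → ∀ K : ℝ, 1 ≤ K →
      ∀ A₂ t : ℝ, A₂ = lam * (1 + lam) / 2 → t = (1 / 60) * (1 + lam)⁻¹ →
      (∫ x in (-(2 * t))..(2 * t),
          Real.exp (K * (-A₂ * x ^ 2 + (3 * A₂ / 4 + 9 * A₂ ^ 2) * x ^ 4)))
        ≤ Real.sqrt (Real.pi / (A₂ * K)) * Real.exp (C * (K⁻¹ + (A₂ * K)⁻¹)) := by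
  refine ⟨50, by norm_num, ?_⟩
  intro lam hlam K hK A₂ t hA ht
  have hK0 : (0:ℝ) < K := lt_of_lt_of_le one_pos hK
  have hl1 : (0:ℝ) < 1 + lam := by linarith
  have hA2 : 0 < A₂ := by rw [hA]; positivity
  set a := A₂ * K with ha_def
  set b := K * (3 * A₂ / 4 + 9 * A₂ ^ 2) with hb_def
  clear_value a b
  have ha : 0 < a := by rw [ha_def]; positivity
  have hb0 : 0 < b := by rw [hb_def]; positivity
  have ht0 : 0 < t := by rw [ht]; positivity
  have hs : -(2*t) ≤ 2*t := by linarith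
  -- key numeric bound
  have hkey : b * (2*t)^2 ≤ a / 2 := by
    have hmain : (3*A₂/4 + 9*A₂^2) * (2*t)^2 ≤ A₂/2 := by
      rw [hA, ht]
      set u := (1 + lam)⁻¹ with hu_def
      have hu0 : 0 ≤ u := by positivity
      have hu1 : u ≤ 1 := by
        rw [hu_def]
        exact inv_le_one_of_one_le₀ (by linarith)
      have h2 : u^2 * (1+lam)^2 = 1 := by
        rw [← mul_pow, inv_mul_cancel₀ (ne_of_gt hl1), one_pow]
      have h3 : lam^2 * (u^2*(1+lam)^2) = lam^2 * 1 := by rw [h2]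
      have h4 : u^2 ≤ 1 := by nlinarith
      nlinarith [h3, h4, mul_nonneg hlam.le hl1.le, hlam.le, hl1.le, sq_nonneg lam,
        mul_nonneg (mul_nonneg hlam.le hl1.le) (sq_nonneg u)]
    calc b * (2*t)^2 = K * ((3*A₂/4 + 9*A₂^2) * (2*t)^2) := by rw [hb_def]; ring
      _ ≤ K * (A₂/2) := mul_le_mul_of_nonneg_left hmain hK0.le
      _ = a / 2 := by rw [ha_def]; ring
  -- pointwise bound
  have hpt : ∀ x ∈ Set.Icc (-(2*t)) (2*t),
      Real.exp (K * (-A₂ * x ^ 2 + (3 * A₂ / 4 + 9 * A₂ ^ 2) * x ^ 4))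
        ≤ Real.exp (-a * x^2) + b * (x^4 * Real.exp (-(a/2) * x^2)) := by
    intro x hx
    have hx2 : x^2 ≤ (2*t)^2 := sq_le_sq' hx.1 hx.2
    have hE : K * (-A₂ * x ^ 2 + (3 * A₂ / 4 + 9 * A₂ ^ 2) * x ^ 4)
        = -a * x^2 + b * x^4 := by rw [ha_def, hb_def]; ring
    rw [hE, Real.exp_add]
    have hy : 0 ≤ b * x^4 := by positivity
    have h4 : b * x^4 ≤ (a/2) * x^2 := by
      nlinarith [mul_le_mul_of_nonneg_left hx2 hb0.le, sq_nonneg x, hb0.le]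
    have h1 : Real.exp (b*x^4) ≤ 1 + (b*x^4) * Real.exp (b*x^4) := by
      have h2 := Real.add_one_le_exp (-(b*x^4))
      rw [Real.exp_neg] at h2
      have h3 := mul_le_mul_of_nonneg_left h2 (Real.exp_pos (b*x^4)).le
      rw [mul_inv_cancel₀ (ne_of_gt (Real.exp_pos (b*x^4)))] at h3
      nlinarith [h3]
    have h5 : Real.exp (b*x^4) ≤ 1 + (b*x^4) * Real.exp ((a/2)*x^2) := by
      refine h1.trans ?_
      gcongr
    calc Real.exp (-a * x^2) * Real.exp (b * x^4)
        ≤ Real.exp (-a * x^2) * (1 + (b*x^4) * Real.exp ((a/2)*x^2)) := by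
          exact mul_le_mul_of_nonneg_left h5 (Real.exp_pos _).le
      _ = Real.exp (-a * x^2) + b * (x^4 * (Real.exp (-a*x^2) * Real.exp ((a/2)*x^2))) := by
          ring
      _ = Real.exp (-a * x^2) + b * (x^4 * Real.exp (-(a/2) * x^2)) := by
          have hq : Real.exp (-a*x^2) * Real.exp ((a/2)*x^2) = Real.exp (-(a/2) * x^2) := by
            rw [show -(a/2)*x^2 = -a*x^2 + (a/2)*x^2 by ring, Real.exp_add]
          rw [hq]
  -- integrability
  have hIg : Integrable (fun x : ℝ => Real.exp (-a * x^2)) := integrable_exp_neg_mul_sq ha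
  have hI4 : Integrable (fun x : ℝ => x^4 * Real.exp (-(a/2) * x^2)) := by
    have h := integrable_rpow_mul_exp_neg_mul_sq (half_pos ha) (s := 4) (by norm_num)
    have : ∀ x : ℝ, x ^ (4:ℝ) = x ^ (4:ℕ) := fun x => by
      rw [show (4:ℝ) = ((4:ℕ):ℝ) by norm_num, Real.rpow_natCast]
    simpa [this] using h
  have hImaj : Integrable (fun x : ℝ =>
      Real.exp (-a * x^2) + b * (x^4 * Real.exp (-(a/2) * x^2))) :=
    hIg.add (hI4.const_mul b)
  have hcont : Continuous (fun x : ℝ =>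
      Real.exp (K * (-A₂ * x ^ 2 + (3 * A₂ / 4 + 9 * A₂ ^ 2) * x ^ 4))) :=
    Real.continuous_exp.comp (by fun_prop)
  -- chain of bounds
  have step1 : (∫ x in (-(2 * t))..(2 * t),
        Real.exp (K * (-A₂ * x ^ 2 + (3 * A₂ / 4 + 9 * A₂ ^ 2) * x ^ 4)))
      ≤ ∫ x in (-(2 * t))..(2 * t),
        (Real.exp (-a * x^2) + b * (x^4 * Real.exp (-(a/2) * x^2))) :=
    intervalIntegral.integral_mono_on hs (hcont.intervalIntegrable _ _)
      hImaj.intervalIntegrable hpt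
  have step2 : (∫ x in (-(2 * t))..(2 * t),
        (Real.exp (-a * x^2) + b * (x^4 * Real.exp (-(a/2) * x^2))))
      ≤ ∫ x : ℝ, (Real.exp (-a * x^2) + b * (x^4 * Real.exp (-(a/2) * x^2))) := by
    rw [intervalIntegral.integral_of_le hs]
    exact setIntegral_le_integral hImaj (Filter.Eventually.of_forall fun x => by positivity)
  have step3 : (∫ x : ℝ, (Real.exp (-a * x^2) + b * (x^4 * Real.exp (-(a/2) * x^2))))
      = Real.sqrt (Real.pi / a) + b * (3 / (4 * (a/2)^2) * Real.sqrt (Real.pi / (a/2))) := by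
    rw [integral_add hIg (hI4.const_mul b), integral_gaussian, MeasureTheory.integral_const_mul,
      gauss4 (half_pos ha)]
  -- final numeric bound
  have hsqrt2 : Real.sqrt 2 ≤ 1.5 := by
    nlinarith [Real.sq_sqrt (by norm_num : (0:ℝ) ≤ 2), Real.sqrt_nonneg 2]
  have hsplit : Real.sqrt (Real.pi / (a/2)) = Real.sqrt 2 * Real.sqrt (Real.pi / a) := by
    rw [← Real.sqrt_mul (by norm_num : (0:ℝ) ≤ 2)]
    congr 1
    field_simp
  have hfrac : b * (3 / (4 * (a/2)^2)) = (9/4) * a⁻¹ + 27 * K⁻¹ := by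
    rw [hb_def, ha_def]
    field_simp
    ring
  have hcoef : b * (3 / (4 * (a/2)^2)) * Real.sqrt 2 ≤ 50 * (K⁻¹ + a⁻¹) := by
    rw [hfrac]
    have hK' : (0:ℝ) ≤ K⁻¹ := by positivity
    have ha' : (0:ℝ) ≤ a⁻¹ := by positivity
    have e1 : (9/4) * a⁻¹ * Real.sqrt 2 ≤ (9/4) * a⁻¹ * 1.5 :=
      mul_le_mul_of_nonneg_left hsqrt2 (by positivity)
    have e2 : 27 * K⁻¹ * Real.sqrt 2 ≤ 27 * K⁻¹ * 1.5 :=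
      mul_le_mul_of_nonneg_left hsqrt2 (by positivity)
    rw [add_mul]
    linarith
  have hfin : Real.sqrt (Real.pi / a) + b * (3 / (4 * (a/2)^2) * Real.sqrt (Real.pi / (a/2)))
      ≤ Real.sqrt (Real.pi / a) * Real.exp (50 * (K⁻¹ + a⁻¹)) := by
    rw [hsplit]
    have hsp : (0:ℝ) ≤ Real.sqrt (Real.pi / a) := Real.sqrt_nonneg _
    have h6 : (1 : ℝ) + 50 * (K⁻¹ + a⁻¹) ≤ Real.exp (50 * (K⁻¹ + a⁻¹)) := by
      have := Real.add_one_le_exp (50 * (K⁻¹ + a⁻¹))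
      linarith
    have h7 : Real.sqrt (Real.pi / a) + b * (3 / (4 * (a/2)^2) * (Real.sqrt 2 * Real.sqrt (Real.pi / a)))
        = Real.sqrt (Real.pi / a) * (1 + b * (3 / (4 * (a/2)^2)) * Real.sqrt 2) := by ring
    rw [h7]
    refine mul_le_mul_of_nonneg_left ?_ hsp
    exact le_trans (by linarith [hcoef]) h6
  linarith [step1, step2, step3.le, hfin, step3.ge]
end
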